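/- Fix ℓ ≥ 1 and let λ, μ be partitions with core(λ) = core(μ). If for every i ∈ {0,…,ℓ−1} the quotient components satisfy |λ^i| = |μ^i| and μ^i ⊴ λ^i in dominance order, then |μ| = |λ| and μ ⊴ λ in dominance order. -/

import Mathlib

/-- A partition: a weakly decreasing, eventually zero sequence of naturals;
`part k` is the `(k+1)`-st part `λ_{k+1}`. -/
structure PartitionSeq where
  part : ℕ → ℕ
  antitone : ∀ a b : ℕ, a ≤ b → part b ≤ part a
  eventually_zero : ∃ N, ∀ n, N ≤ n → part n = 0

namespace Wreath

attribute [local instance] Classical.propDecidable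

/-- The conjugate partition: `conj lam a = ᵗλ_a` for `a ≥ 1`. -/
noncomputable def conj (lam : PartitionSeq) (a : ℕ) : ℕ :=
  Set.ncard {k : ℕ | a ≤ lam.part k}

/-- The Maya diagram of a partition: value `+1` at `j` iff `j = ᵗλ_a − a` for some `a ≥ 1`. -/
noncomputable def mayaFun (lam : PartitionSeq) : ℤ → ℤ := fun j =>
  if ∃ a : ℕ, j = (conj lam (a + 1) : ℤ) - (a + 1 : ℤ) then 1 else -1

/-- `f : ℤ → ℤ` is a Maya diagram: values `±1`, eventually `-1` to the right (large `j`),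
eventually `+1` to the left (small `j`). -/
def IsMayaFun (f : ℤ → ℤ) : Prop :=
  (∀ j, f j = 1 ∨ f j = -1) ∧ (∃ N : ℤ, ∀ j, N ≤ j → f j = -1) ∧
    (∃ N : ℤ, ∀ j, j ≤ N → f j = 1)

/-- The charge `#{j < 0 : f j = −1} − #{j ≥ 0 : f j = 1}`. -/
noncomputable def chargeFun (f : ℤ → ℤ) : ℤ :=
  (Set.ncard {j : ℤ | j < 0 ∧ f j = -1} : ℤ) - (Set.ncard {j : ℤ | 0 ≤ j ∧ f j = 1} : ℤ)

def emptyPartition : PartitionSeq :=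
  ⟨fun _ => 0, fun _ _ _ => le_rfl, ⟨0, fun _ _ => rfl⟩⟩

/-- The partition whose Maya diagram is `f` (junk value if there is none). -/
noncomputable def partitionOfMaya (f : ℤ → ℤ) : PartitionSeq :=
  if h : ∃ lam : PartitionSeq, mayaFun lam = f then h.choose else emptyPartition

/-- The charge `c_i(λ)` of the `i`-th quotient Maya diagram `j ↦ m(λ)(i + jℓ)`. -/
noncomputable def chargeQuot (ℓ : ℕ) (lam : PartitionSeq) (i : ℤ) : ℤ :=
  chargeFun fun j => mayaFun lam (i + j * (ℓ : ℤ))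

/-- The `i`-th quotient component `λ^i`: the partition whose Maya diagram is
`j ↦ m_i(λ)(j − c_i(λ))`. -/
noncomputable def quotComp (ℓ : ℕ) (lam : PartitionSeq) (i : ℤ) : PartitionSeq :=
  partitionOfMaya fun j => mayaFun lam (i + (j - chargeQuot ℓ lam i) * (ℓ : ℤ))

/-- The `ℓ`-core of `λ`: the partition whose Maya diagram has value `−1` at `i + jℓ`
(`0 ≤ i < ℓ`) exactly when `j ≥ −c_i(λ)`. -/
noncomputable def coreOf (ℓ : ℕ) (lam : PartitionSeq) : PartitionSeq :=
  partitionOfMaya fun j =>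
    if -(chargeQuot ℓ lam (Int.emod j (ℓ : ℤ))) ≤ Int.ediv j (ℓ : ℤ) then -1 else 1

/-- Membership of the node `x = (a,b)` in the Young diagram of `lam`:
`1 ≤ a`, `1 ≤ b`, `a ≤ λ_b`.  The content of `(a,b)` is `b − a`. -/
def Partition.memYD (lam : PartitionSeq) (x : ℤ × ℤ) : Prop :=
  1 ≤ x.1 ∧ 1 ≤ x.2 ∧ x.1 ≤ (lam.part (x.2 - 1).toNat : ℤ)

/-- Containment of Young diagrams. -/
def Sub (lam mu : PartitionSeq) : Prop := ∀ x, Partition.memYD lam x → Partition.memYD mu x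

/-- Membership in the skew diagram `μ∖λ`. -/
def SkewMem (lam mu : PartitionSeq) (x : ℤ × ℤ) : Prop :=
  Partition.memYD mu x ∧ ¬ Partition.memYD lam x

/-- The number of nodes of `μ∖λ`. -/
noncomputable def skewSize (lam mu : PartitionSeq) : ℕ := Set.ncard {x | SkewMem lam mu x}

/-- The size `|λ|`. -/
noncomputable def Partition.size (lam : PartitionSeq) : ℕ := Set.ncard {x | Partition.memYD lam x}

/-- Edge-adjacency of nodes. -/
def adjacent (x y : ℤ × ℤ) : Prop :=
  (x.1 = y.1 ∧ (x.2 = y.2 + 1 ∨ y.2 = x.2 + 1)) ∨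
  (x.2 = y.2 ∧ (x.1 = y.1 + 1 ∨ y.1 = x.1 + 1))

/-- `μ∖λ` is a border strip: `λ ⊆ μ`, nonempty, connected through edge-adjacent nodes,
and containing no 2×2 block. -/
def IsBorderStrip (lam mu : PartitionSeq) : Prop :=
  Sub lam mu ∧ (∃ x, SkewMem lam mu x) ∧
  (∀ x y, SkewMem lam mu x → SkewMem lam mu y →
    Relation.ReflTransGen (fun u v => SkewMem lam mu u ∧ SkewMem lam mu v ∧ adjacent u v) x y) ∧
  ¬ ∃ a b : ℤ, SkewMem lam mu (a, b) ∧ SkewMem lam mu (a + 1, b) ∧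
      SkewMem lam mu (a, b + 1) ∧ SkewMem lam mu (a + 1, b + 1)

/-- An `ℓ`-core: a partition from which no border strip of `ℓ` nodes can be removed. -/
def IsCore (ℓ : ℕ) (lam : PartitionSeq) : Prop :=
  ¬ ∃ mu : PartitionSeq, IsBorderStrip mu lam ∧ skewSize mu lam = ℓ

/-- Dominance order (on partitions of the same size): `Dom μ λ` means `μ ⊴ λ`. -/
def Dom (mu lam : PartitionSeq) : Prop :=
  Partition.size mu = Partition.size lam ∧
  ∀ k : ℕ, ∑ b ∈ Finset.range k, mu.part b ≤ ∑ b ∈ Finset.range k, lam.part b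

/-- `x` is the node of `μ∖λ` of largest content (the initial node of a strip). -/
def IsMaxContentNode (lam mu : PartitionSeq) (x : ℤ × ℤ) : Prop :=
  SkewMem lam mu x ∧ ∀ y, SkewMem lam mu y → y.2 - y.1 ≤ x.2 - x.1

/-- `x` is the node of `μ∖λ` of smallest content (the final node of a strip). -/
def IsMinContentNode (lam mu : PartitionSeq) (x : ℤ × ℤ) : Prop :=
  SkewMem lam mu x ∧ ∀ y, SkewMem lam mu y → x.2 - x.1 ≤ y.2 - y.1

/-- Add `1` to each of the first `k` parts (append a column of height `k`). -/
def addColParts (k : ℕ) (f : ℕ → ℕ) : ℕ → ℕ := fun r => if r < k then f r + 1 else f r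

/-- The number of (nonzero) rows of a partition. -/
noncomputable def numRows (nu : PartitionSeq) : ℕ := Set.ncard {r : ℕ | 0 < nu.part r}

/-- Append a new final row of length `k` after `len` rows. -/
def addRowParts (k len : ℕ) (f : ℕ → ℕ) : ℕ → ℕ :=
  fun r => if r < len then f r else if r = len then k else 0

/-- One column-addition step: `μ` is obtained from `ν` by adding, in component `i` of the
`ℓ`-quotient, a new column of height `k` no taller than any existing column. -/
def IsColStep (ℓ : ℕ) (nu mu : PartitionSeq) (i k : ℕ) : Prop :=
  i < ℓ ∧ 1 ≤ k ∧
  (∀ a : ℕ, 1 ≤ a → (a : ℕ) ≤ (quotComp ℓ nu (i : ℤ)).part 0 →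
    k ≤ conj (quotComp ℓ nu (i : ℤ)) a) ∧
  coreOf ℓ mu = coreOf ℓ nu ∧
  (∀ i' : ℕ, i' < ℓ → i' ≠ i → quotComp ℓ mu (i' : ℤ) = quotComp ℓ nu (i' : ℤ)) ∧
  (quotComp ℓ mu (i : ℤ)).part = addColParts k ((quotComp ℓ nu (i : ℤ)).part)

/-- One row-addition step: `μ` is obtained from `ν` by adding, in component `i` of the
`ℓ`-quotient, a new final row of length `k` no longer than any existing row. -/
def IsRowStep (ℓ : ℕ) (nu mu : PartitionSeq) (i k : ℕ) : Prop :=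
  i < ℓ ∧ 1 ≤ k ∧
  (∀ r : ℕ, 0 < (quotComp ℓ nu (i : ℤ)).part r → k ≤ (quotComp ℓ nu (i : ℤ)).part r) ∧
  coreOf ℓ mu = coreOf ℓ nu ∧
  (∀ i' : ℕ, i' < ℓ → i' ≠ i → quotComp ℓ mu (i' : ℤ) = quotComp ℓ nu (i' : ℤ)) ∧
  (quotComp ℓ mu (i : ℤ)).part =
    addRowParts k (numRows (quotComp ℓ nu (i : ℤ))) ((quotComp ℓ nu (i : ℤ)).part)

/-- A column-addition sequence for `λ`. -/
def IsColSeq (ℓ : ℕ) (lam : PartitionSeq) (N : ℕ) (seq : ℕ → PartitionSeq) : Prop :=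
  seq 0 = coreOf ℓ lam ∧ seq N = lam ∧
  ∀ t, t < N → ∃ i k, IsColStep ℓ (seq t) (seq (t + 1)) i k

/-- A row-addition sequence for `λ`. -/
def IsRowSeq (ℓ : ℕ) (lam : PartitionSeq) (N : ℕ) (seq : ℕ → PartitionSeq) : Prop :=
  seq 0 = coreOf ℓ lam ∧ seq N = lam ∧
  ∀ t, t < N → ∃ i k, IsRowStep ℓ (seq t) (seq (t + 1)) i k

/-- Left-to-right order on a column-addition sequence: for `1 ≤ r < s ≤ N` the content of the
initial node of the `r`-th strip is strictly greater than the content of the final node of the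
`s`-th strip. -/
def LeftToRight (N : ℕ) (seq : ℕ → PartitionSeq) : Prop :=
  ∀ r s, 1 ≤ r → r < s → s ≤ N → ∀ x y,
    IsMaxContentNode (seq (r - 1)) (seq r) x →
    IsMinContentNode (seq (s - 1)) (seq s) y →
    y.2 - y.1 < x.2 - x.1

/-- Right-to-left order on a row-addition sequence: for `1 ≤ r < s ≤ N` the content of the
final node of the `r`-th strip is strictly less than the content of the final node of the
`s`-th strip. -/
def RightToLeft (N : ℕ) (seq : ℕ → PartitionSeq) : Prop :=
  ∀ r s, 1 ≤ r → r < s → s ≤ N → ∀ x y,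
    IsMinContentNode (seq (r - 1)) (seq r) x →
    IsMinContentNode (seq (s - 1)) (seq s) y →
    x.2 - x.1 < y.2 - y.1

/-- `x` is an addable node of `λ`. -/
def Addable (lam : PartitionSeq) (x : ℤ × ℤ) : Prop :=
  ¬ Partition.memYD lam x ∧
    ∃ mu : PartitionSeq, ∀ y, Partition.memYD mu y ↔ (Partition.memYD lam y ∨ y = x)

/-- `x` is a removable node of `λ`. -/
def Removable (lam : PartitionSeq) (x : ℤ × ℤ) : Prop :=
  Partition.memYD lam x ∧
    ∃ mu : PartitionSeq, ∀ y, Partition.memYD mu y ↔ (Partition.memYD lam y ∧ y ≠ x)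

end Wreath

open Wreath

namespace Wreath
attribute [local instance] Classical.propDecidable

noncomputable def nzero (ν : PartitionSeq) : ℕ := ν.eventually_zero.choose

lemma nzero_spec (ν : PartitionSeq) {n : ℕ} (h : nzero ν ≤ n) : ν.part n = 0 :=
  ν.eventually_zero.choose_spec n h

/-- `ebd ν b = b − λ_{b+1}`, the "nonbead" positions. -/
def ebd (ν : PartitionSeq) (b : ℕ) : ℤ := (b : ℤ) - ν.part b

lemma ebd_strictMono (ν : PartitionSeq) : StrictMono (ebd ν) := by
  apply strictMono_nat_of_lt_succ
  intro b
  have := ν.antitone b (b+1) (Nat.le_succ b)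
  unfold ebd; push_cast; omega

lemma ebd_ge (ν : PartitionSeq) (b : ℕ) : -(ν.part 0 : ℤ) ≤ ebd ν b := by
  have h := (ebd_strictMono ν).monotone (Nat.zero_le b)
  have : ebd ν 0 = -(ν.part 0 : ℤ) := by simp [ebd]
  omega

lemma ebd_eq_self (ν : PartitionSeq) {b : ℕ} (h : nzero ν ≤ b) : ebd ν b = b := by
  simp [ebd, nzero_spec ν h]

lemma ebd_le_self (ν : PartitionSeq) (b : ℕ) : ebd ν b ≤ b := by
  simp [ebd]

/-- A downward closed finite set of naturals is an initial segment. -/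
lemma mem_iff_lt_ncard {s : Set ℕ} (hfin : s.Finite)
    (hdc : ∀ a b : ℕ, a ≤ b → b ∈ s → a ∈ s) (n : ℕ) : n ∈ s ↔ n < s.ncard := by
  constructor
  · intro hn
    have hsub : Set.Iic n ⊆ s := fun m hm => hdc m n hm hn
    have h1 : (Set.Iic n).ncard = n + 1 := by
      rw [← Finset.coe_Iic, Set.ncard_coe_finset, Nat.card_Iic]
    have := Set.ncard_le_ncard hsub hfin
    omega
  · intro hn
    by_contra hns
    have hsub : s ⊆ Set.Iio n := by
      intro b hb
      by_contra hbn
      exact hns (hdc n b (le_of_not_gt hbn) hb)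
    have h1 : (Set.Iio n).ncard = n := by
      rw [← Finset.coe_Iio, Set.ncard_coe_finset, Nat.card_Iio]
    have := Set.ncard_le_ncard hsub (Set.finite_Iio n)
    omega

/-- `tf ν m` = number of nonbeads below `m`. -/
noncomputable def tf (ν : PartitionSeq) (m : ℤ) : ℕ := Set.ncard {b : ℕ | ebd ν b < m}

lemma tf_finite (ν : PartitionSeq) (m : ℤ) : {b : ℕ | ebd ν b < m}.Finite := by
  apply Set.Finite.subset (Set.finite_Iio (nzero ν ⊔ m.toNat))
  intro b hb
  simp only [Set.mem_setOf_eq] at hb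
  simp only [Set.mem_Iio, lt_sup_iff]
  by_contra hc
  push_neg at hc
  obtain ⟨h1, h2⟩ := hc
  rw [ebd_eq_self ν h1] at hb
  omega

lemma lt_tf_iff (ν : PartitionSeq) (m : ℤ) (b : ℕ) : b < tf ν m ↔ ebd ν b < m := by
  rw [tf, ← mem_iff_lt_ncard (tf_finite ν m)
    (fun a b hab hb => lt_of_le_of_lt ((ebd_strictMono ν).monotone hab) hb) b]
  rfl

lemma tf_eq_zero (ν : PartitionSeq) {m : ℤ} (h : m ≤ -(ν.part 0 : ℤ)) : tf ν m = 0 := by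
  have hs : {b : ℕ | ebd ν b < m} = ∅ := by
    ext b
    simp only [Set.mem_setOf_eq, Set.mem_empty_iff_false, iff_false, not_lt]
    exact le_trans h (ebd_ge ν b)
  simp [tf, hs]

lemma tf_cast_eq (ν : PartitionSeq) {m : ℤ} (h : (nzero ν : ℤ) ≤ m) : (tf ν m : ℤ) = m := by
  have hset : {b : ℕ | ebd ν b < m} = ↑(Finset.range m.toNat) := by
    ext b
    simp only [Set.mem_setOf_eq, Finset.coe_range, Set.mem_Iio, Finset.mem_range]
    constructor
    · intro hb
      rcases le_or_gt (nzero ν) b with hb' | hb'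
      · rw [ebd_eq_self ν hb'] at hb; omega
      · have : (b : ℤ) < m := lt_of_lt_of_le (by exact_mod_cast hb') h
        omega
    · intro hb
      have := ebd_le_self ν b
      omega
  rw [tf, hset, Set.ncard_coe_finset, Finset.card_range]
  omega

lemma conj_finite (ν : PartitionSeq) {a : ℕ} (ha : 1 ≤ a) : {k : ℕ | a ≤ ν.part k}.Finite := by
  apply Set.Finite.subset (Set.finite_Iio (nzero ν))
  intro k hk
  simp only [Set.mem_setOf_eq] at hk
  simp only [Set.mem_Iio]
  by_contra hc
  rw [nzero_spec ν (le_of_not_gt hc)] at hk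
  omega

lemma lt_conj_iff (ν : PartitionSeq) {a : ℕ} (ha : 1 ≤ a) (k : ℕ) :
    k < conj ν a ↔ a ≤ ν.part k := by
  rw [conj, ← mem_iff_lt_ncard (conj_finite ν ha)
    (fun b c hbc hc => le_trans hc (ν.antitone b c hbc)) k]
  rfl

lemma conj_eq_zero (ν : PartitionSeq) {a : ℕ} (ha : ν.part 0 < a) : conj ν a = 0 := by
  have hs : {k : ℕ | a ≤ ν.part k} = ∅ := by
    ext k
    simp only [Set.mem_setOf_eq, Set.mem_empty_iff_false, iff_false, not_le]
    exact lt_of_le_of_lt (ν.antitone 0 k (Nat.zero_le k)) ha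
  simp [conj, hs]

/-- Complement lemma: the beads are exactly the non-values of `ebd`. -/
lemma maya_complement (ν : PartitionSeq) (j : ℤ) :
    (∃ a : ℕ, j = (conj ν (a + 1) : ℤ) - (a + 1 : ℤ)) ↔ ∀ b : ℕ, j ≠ ebd ν b := by
  constructor
  · rintro ⟨a, ha⟩ b hb
    have hg := lt_conj_iff ν (show 1 ≤ a + 1 by omega) b
    unfold ebd at hb
    rcases le_or_gt (a + 1) (ν.part b) with hp | hp
    · have := hg.mpr hp
      omega
    · have : ¬ (b < conj ν (a+1)) := fun hc => by have := hg.mp hc; omega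
      omega
  · intro h
    -- t := tf ν j, c := t - j ≥ 1, conj ν c = t
    have ht1 : (j : ℤ) + 1 ≤ (tf ν j : ℤ) := by
      rcases lt_or_ge j 0 with hj | hj
      · have : (0:ℤ) ≤ (tf ν j : ℤ) := by positivity
        omega
      · have hlt : ebd ν j.toNat < j := by
          have h1 := ebd_le_self ν j.toNat
          have h2 := h j.toNat
          omega
        have := (lt_tf_iff ν j j.toNat).mpr hlt
        omega
    set t : ℕ := tf ν j with ht
    have hc1 : 1 ≤ (t : ℤ) - j := by omega
    set c : ℕ := ((t : ℤ) - j).toNat with hcdef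
    have hcc : (c : ℤ) = (t : ℤ) - j := by omega
    have hc1' : 1 ≤ c := by omega
    -- conj ν c ≥ t
    have hge : t ≤ conj ν c := by
      rcases Nat.eq_zero_or_pos t with h0 | hpos
      · omega
      · have hbt : t - 1 < t := by omega
        have hebd : ebd ν (t-1) < j := (lt_tf_iff ν j (t-1)).mp hbt
        have hpart : c ≤ ν.part (t-1) := by
          unfold ebd at hebd
          have : ((t:ℤ) - 1) - ν.part (t-1) < j := by
            have : ((t - 1 : ℕ) : ℤ) = (t : ℤ) - 1 := by omega
            omega
          omega
        have := (lt_conj_iff ν hc1' (t-1)).mpr hpart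
        omega
    -- conj ν c ≤ t
    have hle : conj ν c ≤ t := by
      by_contra hcon
      push_neg at hcon
      have hpart : c ≤ ν.part t := (lt_conj_iff ν hc1' t).mp hcon
      have h1 : ¬ (t < t) := lt_irrefl t
      have h2 : ¬ (ebd ν t < j) := fun hc => h1 ((lt_tf_iff ν j t).mpr hc)
      have h3 := h t
      unfold ebd at h2 h3
      omega
    refine ⟨c - 1, ?_⟩
    have : c - 1 + 1 = c := by omega
    rw [this]
    have hconj : conj ν c = t := le_antisymm hle hge
    rw [hconj]
    omega

lemma mayaFun_eq_one_iff (ν : PartitionSeq) (j : ℤ) :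
    mayaFun ν j = 1 ↔ ∀ b : ℕ, j ≠ ebd ν b := by
  rw [← maya_complement]
  unfold mayaFun
  split_ifs with hex
  · simp [hex]
  · simp [hex]

lemma mayaFun_eq_neg_one_iff (ν : PartitionSeq) (j : ℤ) :
    mayaFun ν j = -1 ↔ ∃ b : ℕ, j = ebd ν b := by
  unfold mayaFun
  split_ifs with hex
  · rw [maya_complement] at hex
    simp only [show (1:ℤ) ≠ -1 by norm_num, false_iff]
    push_neg
    intro b
    exact hex b
  · rw [maya_complement] at hex
    push_neg at hex
    obtain ⟨b, hb⟩ := hex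
    simp only [true_iff]
    exact ⟨b, hb⟩

lemma mayaFun_values (ν : PartitionSeq) (j : ℤ) : mayaFun ν j = 1 ∨ mayaFun ν j = -1 := by
  unfold mayaFun; split_ifs <;> simp

lemma isMayaFun_mayaFun (ν : PartitionSeq) : IsMayaFun (mayaFun ν) := by
  refine ⟨mayaFun_values ν, ⟨nzero ν, ?_⟩, ⟨-(ν.part 0 : ℤ) - 1, ?_⟩⟩
  · intro j hj
    rw [mayaFun_eq_neg_one_iff]
    refine ⟨j.toNat, ?_⟩
    rw [ebd_eq_self ν (by omega)]
    omega
  · intro j hj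
    rw [mayaFun_eq_one_iff]
    intro b hb
    have := ebd_ge ν b
    omega

end Wreath
namespace Wreath
attribute [local instance] Classical.propDecidable

lemma charge_finA (f : ℤ → ℤ) (hf : IsMayaFun f) (d : ℤ) :
    {j : ℤ | j < d ∧ f j = -1}.Finite := by
  obtain ⟨N2, hN2⟩ := hf.2.2
  apply Set.Finite.subset (Set.finite_Ioo N2 d)
  rintro j ⟨hj, hfj⟩
  simp only [Set.mem_Ioo]
  refine ⟨?_, hj⟩
  by_contra hc
  have := hN2 j (le_of_not_gt hc)
  omega

lemma charge_finB (f : ℤ → ℤ) (hf : IsMayaFun f) (d : ℤ) :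
    {j : ℤ | d ≤ j ∧ f j = 1}.Finite := by
  obtain ⟨N1, hN1⟩ := hf.2.1
  apply Set.Finite.subset (Set.finite_Ico d N1)
  rintro j ⟨hj, hfj⟩
  simp only [Set.mem_Ico]
  refine ⟨hj, ?_⟩
  by_contra hc
  have := hN1 j (le_of_not_gt hc)
  omega

lemma charge_count (f : ℤ → ℤ) (hf : IsMayaFun f) (d : ℤ) :
    (Set.ncard {j : ℤ | j < d ∧ f j = -1} : ℤ) - Set.ncard {j : ℤ | d ≤ j ∧ f j = 1}
      = chargeFun f + d := by
  have step : ∀ e : ℤ,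
      (Set.ncard {j : ℤ | j < e + 1 ∧ f j = -1} : ℤ) - Set.ncard {j : ℤ | e + 1 ≤ j ∧ f j = 1}
      = ((Set.ncard {j : ℤ | j < e ∧ f j = -1} : ℤ) - Set.ncard {j : ℤ | e ≤ j ∧ f j = 1}) + 1 := by
    intro e
    rcases hf.1 e with he | he
    · have hA : {j : ℤ | j < e + 1 ∧ f j = -1} = {j : ℤ | j < e ∧ f j = -1} := by
        ext j
        simp only [Set.mem_setOf_eq]
        constructor
        · rintro ⟨h1, h2⟩
          refine ⟨?_, h2⟩
          rcases eq_or_lt_of_le (show j ≤ e by omega) with h | h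
          · subst h; omega
          · exact h
        · rintro ⟨h1, h2⟩; exact ⟨by omega, h2⟩
      have hB : {j : ℤ | e ≤ j ∧ f j = 1} = insert e {j : ℤ | e + 1 ≤ j ∧ f j = 1} := by
        ext j
        simp only [Set.mem_setOf_eq, Set.mem_insert_iff]
        constructor
        · rintro ⟨h1, h2⟩
          rcases eq_or_lt_of_le h1 with h | h
          · exact Or.inl h.symm
          · exact Or.inr ⟨by omega, h2⟩
        · rintro (h | ⟨h1, h2⟩)
          · subst h; exact ⟨le_refl _, he⟩
          · exact ⟨by omega, h2⟩
      rw [hA, hB, Set.ncard_insert_of_notMem (by simp) (charge_finB f hf (e+1))]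
      push_cast
      ring
    · have hA : {j : ℤ | j < e + 1 ∧ f j = -1} = insert e {j : ℤ | j < e ∧ f j = -1} := by
        ext j
        simp only [Set.mem_setOf_eq, Set.mem_insert_iff]
        constructor
        · rintro ⟨h1, h2⟩
          rcases eq_or_lt_of_le (show j ≤ e by omega) with h | h
          · exact Or.inl h
          · exact Or.inr ⟨h, h2⟩
        · rintro (h | ⟨h1, h2⟩)
          · subst h; exact ⟨by omega, he⟩
          · exact ⟨by omega, h2⟩
      have hB : {j : ℤ | e ≤ j ∧ f j = 1} = {j : ℤ | e + 1 ≤ j ∧ f j = 1} := by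
        ext j
        simp only [Set.mem_setOf_eq]
        constructor
        · rintro ⟨h1, h2⟩
          refine ⟨?_, h2⟩
          rcases eq_or_lt_of_le h1 with h | h
          · subst h; omega
          · omega
        · rintro ⟨h1, h2⟩; exact ⟨by omega, h2⟩
      rw [hA, hB, Set.ncard_insert_of_notMem (by simp) (charge_finA f hf e)]
      push_cast
      ring
  induction d using Int.induction_on with
  | zero => simp [chargeFun]
  | succ k ih => rw [step k, ih]; push_cast; ring
  | pred k ih =>
      have := step (-(k:ℤ)-1)
      have h2 : (-(k:ℤ)-1) + 1 = -(k:ℤ) := by ring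
      rw [h2] at this
      rw [this] at ih
      omega

lemma chargeFun_shift (f : ℤ → ℤ) (hf : IsMayaFun f) (c : ℤ) :
    chargeFun (fun j => f (j - c)) = chargeFun f - c := by
  have hA : {j : ℤ | j < 0 ∧ (fun j => f (j - c)) j = -1}
      = (fun m => m + c) '' {j : ℤ | j < -c ∧ f j = -1} := by
    ext j
    simp only [Set.mem_setOf_eq, Set.mem_image]
    constructor
    · rintro ⟨h1, h2⟩
      exact ⟨j - c, ⟨by omega, h2⟩, by ring⟩
    · rintro ⟨m, ⟨h1, h2⟩, rfl⟩
      constructor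
      · omega
      · simpa using h2
  have hB : {j : ℤ | 0 ≤ j ∧ (fun j => f (j - c)) j = 1}
      = (fun m => m + c) '' {j : ℤ | -c ≤ j ∧ f j = 1} := by
    ext j
    simp only [Set.mem_setOf_eq, Set.mem_image]
    constructor
    · rintro ⟨h1, h2⟩
      exact ⟨j - c, ⟨by omega, h2⟩, by ring⟩
    · rintro ⟨m, ⟨h1, h2⟩, rfl⟩
      constructor
      · omega
      · simpa using h2
  have hinj : Function.Injective (fun m : ℤ => m + c) := fun a b h => by simpa using h
  rw [chargeFun, hA, hB, Set.ncard_image_of_injective _ hinj, Set.ncard_image_of_injective _ hinj]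
  have := charge_count f hf (-c)
  omega

/-- number of nonbeads below `m`, as an `ncard` over `ℤ`. -/
lemma tf_eq_ncard_maya (ν : PartitionSeq) (m : ℤ) :
    tf ν m = {j : ℤ | j < m ∧ mayaFun ν j = -1}.ncard := by
  have himg : {j : ℤ | j < m ∧ mayaFun ν j = -1} = ebd ν '' {b : ℕ | ebd ν b < m} := by
    ext j
    simp only [Set.mem_setOf_eq, Set.mem_image]
    constructor
    · rintro ⟨h1, h2⟩
      obtain ⟨b, hb⟩ := (mayaFun_eq_neg_one_iff ν j).mp h2
      exact ⟨b, by omega, hb.symm⟩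
    · rintro ⟨b, hb, rfl⟩
      exact ⟨hb, (mayaFun_eq_neg_one_iff ν _).mpr ⟨b, rfl⟩⟩
  rw [himg, Set.ncard_image_of_injective _ (ebd_strictMono ν).injective]
  rfl

lemma chargeFun_mayaFun (ν : PartitionSeq) : chargeFun (mayaFun ν) = 0 := by
  have hd := charge_count (mayaFun ν) (isMayaFun_mayaFun ν) (nzero ν)
  have hB : {j : ℤ | (nzero ν : ℤ) ≤ j ∧ mayaFun ν j = 1} = ∅ := by
    ext j
    simp only [Set.mem_setOf_eq, Set.mem_empty_iff_false, iff_false, not_and]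
    intro hj
    have : mayaFun ν j = -1 := (mayaFun_eq_neg_one_iff ν j).mpr
      ⟨j.toNat, by rw [ebd_eq_self ν (by omega)]; omega⟩
    omega
  rw [hB] at hd
  have hA : ({j : ℤ | j < (nzero ν : ℤ) ∧ mayaFun ν j = -1}.ncard : ℤ) = nzero ν := by
    rw [← tf_eq_ncard_maya ν (nzero ν)]
    exact tf_cast_eq ν (le_refl _)
  rw [hA] at hd
  simp at hd
  omega

end Wreath
namespace Wreath
attribute [local instance] Classical.propDecidable

lemma ncard_residue {ℓ : ℕ} (hl : 1 ≤ ℓ) (P : ℤ → Prop) (hfin : {j : ℤ | P j}.Finite) :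
    {j : ℤ | P j}.ncard = ∑ i ∈ Finset.range ℓ, {q : ℤ | P ((i : ℤ) + q * ℓ)}.ncard := by
  have hl' : (0 : ℤ) < (ℓ : ℤ) := by exact_mod_cast hl
  have stepA : ∀ i : ℕ, i < ℓ →
      {q : ℤ | P ((i : ℤ) + q * ℓ)}.ncard = {j : ℤ | P j ∧ j % (ℓ : ℤ) = i}.ncard := by
    intro i hi
    have himg : {j : ℤ | P j ∧ j % (ℓ : ℤ) = i}
        = (fun q : ℤ => (i : ℤ) + q * ℓ) '' {q : ℤ | P ((i : ℤ) + q * ℓ)} := by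
      ext j
      simp only [Set.mem_setOf_eq, Set.mem_image]
      constructor
      · rintro ⟨hP, hmod⟩
        refine ⟨j / ℓ, ?_, ?_⟩
        · have : (i : ℤ) + (j / ℓ) * ℓ = j := by
            have := Int.emod_add_mul_ediv j (ℓ : ℤ)
            have hcomm : (j / (ℓ:ℤ)) * ℓ = ℓ * (j / ℓ) := mul_comm _ _
            rw [← hmod]
            omega
          rw [this]; exact hP
        · have := Int.emod_add_mul_ediv j (ℓ : ℤ)
          have hcomm : (j / (ℓ:ℤ)) * ℓ = ℓ * (j / ℓ) := mul_comm _ _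
          rw [← hmod]
          omega
      · rintro ⟨q, hP, rfl⟩
        refine ⟨hP, ?_⟩
        rw [Int.add_mul_emod_self_right]
        exact Int.emod_eq_of_lt (by positivity) (by exact_mod_cast hi)
    rw [himg, Set.ncard_image_of_injective]
    intro a b hab
    simp only at hab
    have : a * ℓ = b * ℓ := by omega
    exact mul_right_cancel₀ (by omega) this
  have hrw : ∀ i ∈ Finset.range ℓ,
      {q : ℤ | P ((i : ℤ) + q * ℓ)}.ncard = {j : ℤ | P j ∧ j % (ℓ : ℤ) = i}.ncard := by
    intro i hi; exact stepA i (Finset.mem_range.mp hi)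
  rw [Finset.sum_congr rfl hrw]
  -- now fiberwise count
  classical
  set s : Finset ℤ := hfin.toFinset with hs
  have hseteq : ∀ i : ℕ, i < ℓ → {j : ℤ | P j ∧ j % (ℓ : ℤ) = i}
      = ↑(s.filter (fun j => (j % (ℓ : ℤ)).toNat = i)) := by
    intro i hi
    ext j
    simp only [Set.mem_setOf_eq, Finset.coe_filter, Set.Finite.mem_toFinset, hs,
      Set.mem_setOf_eq]
    constructor
    · rintro ⟨h1, h2⟩; exact ⟨h1, by omega⟩
    · rintro ⟨h1, h2⟩
      refine ⟨h1, ?_⟩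
      have h0 : 0 ≤ j % (ℓ : ℤ) := Int.emod_nonneg j (by omega)
      omega
  have hsum : ∑ i ∈ Finset.range ℓ, {j : ℤ | P j ∧ j % (ℓ : ℤ) = i}.ncard
      = ∑ i ∈ Finset.range ℓ, (s.filter (fun j => (j % (ℓ : ℤ)).toNat = i)).card := by
    apply Finset.sum_congr rfl
    intro i hi
    rw [hseteq i (Finset.mem_range.mp hi), Set.ncard_coe_finset]
  rw [hsum, ← Finset.card_eq_sum_card_fiberwise (f := fun j => (j % (ℓ : ℤ)).toNat)
    (t := Finset.range ℓ)]
  · rw [← Set.ncard_coe_finset s, hs]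
    congr 1
    simp
  · intro x hx
    have h0 : 0 ≤ x % (ℓ : ℤ) := Int.emod_nonneg x (by omega)
    have h1 : x % (ℓ : ℤ) < ℓ := Int.emod_lt_of_pos x hl'
    simp only [Finset.coe_range, Set.mem_Iio, Finset.mem_range]
    omega

lemma chargeFun_residue {ℓ : ℕ} (hl : 1 ≤ ℓ) (f : ℤ → ℤ) (hf : IsMayaFun f) :
    chargeFun f = ∑ i ∈ Finset.range ℓ, chargeFun (fun q => f ((i : ℤ) + q * ℓ)) := by
  have hAset : ∀ i : ℕ, i < ℓ →
      {q : ℤ | (i : ℤ) + q * ℓ < 0 ∧ f ((i : ℤ) + q * ℓ) = -1}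
        = {q : ℤ | q < 0 ∧ f ((i : ℤ) + q * ℓ) = -1} := by
    intro i hi
    ext q
    simp only [Set.mem_setOf_eq]
    have hl' : (1 : ℤ) ≤ (ℓ : ℤ) := by exact_mod_cast hl
    have hi' : (i : ℤ) < ℓ := by exact_mod_cast hi
    constructor
    · rintro ⟨h1, h2⟩
      refine ⟨?_, h2⟩
      by_contra hq
      push_neg at hq
      nlinarith [Int.natCast_nonneg i]
    · rintro ⟨h1, h2⟩
      refine ⟨?_, h2⟩
      have : q * ℓ ≤ -ℓ := by nlinarith
      omega
  have hBset : ∀ i : ℕ, i < ℓ →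
      {q : ℤ | 0 ≤ (i : ℤ) + q * ℓ ∧ f ((i : ℤ) + q * ℓ) = 1}
        = {q : ℤ | 0 ≤ q ∧ f ((i : ℤ) + q * ℓ) = 1} := by
    intro i hi
    ext q
    simp only [Set.mem_setOf_eq]
    have hl' : (1 : ℤ) ≤ (ℓ : ℤ) := by exact_mod_cast hl
    have hi' : (i : ℤ) < ℓ := by exact_mod_cast hi
    constructor
    · rintro ⟨h1, h2⟩
      refine ⟨?_, h2⟩
      by_contra hq
      push_neg at hq
      have : q * ℓ ≤ -ℓ := by nlinarith
      omega
    · rintro ⟨h1, h2⟩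
      refine ⟨?_, h2⟩
      nlinarith [Int.natCast_nonneg i]
  have hA := ncard_residue hl (fun j => j < 0 ∧ f j = -1) (charge_finA f hf 0)
  have hB := ncard_residue hl (fun j => 0 ≤ j ∧ f j = 1) (charge_finB f hf 0)
  unfold chargeFun
  rw [hA, hB]
  push_cast
  rw [← Finset.sum_sub_distrib]
  apply Finset.sum_congr rfl
  intro i hi
  rw [hAset i (Finset.mem_range.mp hi), hBset i (Finset.mem_range.mp hi)]

lemma isMayaFun_res (f : ℤ → ℤ) (hf : IsMayaFun f) {ℓ : ℕ} (hl : 1 ≤ ℓ) {i : ℤ}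
    (hi : 0 ≤ i) : IsMayaFun (fun q => f (i + q * ℓ)) := by
  obtain ⟨hv, ⟨N1, hN1⟩, ⟨N2, hN2⟩⟩ := hf
  have hl' : (1 : ℤ) ≤ (ℓ : ℤ) := by exact_mod_cast hl
  refine ⟨fun q => hv _, ⟨max N1 0, ?_⟩, ⟨min (N2 - i) 0, ?_⟩⟩
  · intro q hq
    apply hN1
    have h0 : 0 ≤ q := le_trans (le_max_right _ _) hq
    have : q ≤ q * ℓ := le_mul_of_one_le_right h0 hl'
    have : N1 ≤ q := le_trans (le_max_left _ _) hq
    omega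
  · intro q hq
    apply hN2
    have h0 : q ≤ 0 := le_trans hq (min_le_right _ _)
    have h1 : q ≤ N2 - i := le_trans hq (min_le_left _ _)
    have : q * ℓ ≤ q := by nlinarith
    omega

lemma isMayaFun_shift (f : ℤ → ℤ) (hf : IsMayaFun f) (c : ℤ) :
    IsMayaFun (fun j => f (j - c)) := by
  obtain ⟨hv, ⟨N1, hN1⟩, ⟨N2, hN2⟩⟩ := hf
  exact ⟨fun q => hv _, ⟨N1 + c, fun j hj => hN1 _ (by omega)⟩,
    ⟨N2 + c, fun j hj => hN2 _ (by omega)⟩⟩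

end Wreath
namespace Wreath
attribute [local instance] Classical.propDecidable

lemma maya_realizable (f : ℤ → ℤ) (hf : IsMayaFun f) (hc : chargeFun f = 0) :
    ∃ ν : PartitionSeq, mayaFun ν = f := by
  classical
  obtain ⟨N1, hN1⟩ := hf.2.1
  obtain ⟨N2, hN2⟩ := hf.2.2
  have hval := hf.1
  have hleast : ∀ t : ℤ, ∃ lb : ℤ, (f lb = -1 ∧ t ≤ lb) ∧ ∀ z : ℤ, (f z = -1 ∧ t ≤ z) → lb ≤ z := by
    intro t
    obtain ⟨lb, h1, h2⟩ := Int.exists_least_of_bdd (P := fun z => f z = -1 ∧ t ≤ z)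
      ⟨t, fun z hz => hz.2⟩
      ⟨max N1 t, hN1 _ (le_max_left _ _), le_max_right _ _⟩
    exact ⟨lb, h1, h2⟩
  choose g hg hgmin using hleast
  set d0 : ℤ := max N1 0 with hd0def
  set e : ℕ → ℤ := fun b => Nat.rec (motive := fun _ => ℤ) (g (N2 + 1))
    (fun _ prev => g (prev + 1)) b with he
  have he0 : e 0 = g (N2 + 1) := rfl
  have hesucc : ∀ b, e (b + 1) = g (e b + 1) := fun b => rfl
  have hemem : ∀ b, f (e b) = -1 := by
    intro b
    cases b with
    | zero => exact (hg (N2+1)).1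
    | succ b => rw [hesucc]; exact (hg _).1
  have hestep : ∀ b, e b + 1 ≤ e (b + 1) := by
    intro b; rw [hesucc]; exact (hg (e b + 1)).2
  have hemono : StrictMono e := strictMono_nat_of_lt_succ (fun b => by have := hestep b; omega)
  have hgrow : ∀ b m : ℕ, e b + m ≤ e (b + m) := by
    intro b m
    induction m with
    | zero => simp
    | succ m ih =>
        have h0 := hestep (b + m)
        rw [show b + (m+1) = (b + m) + 1 from rfl]
        push_cast
        push_cast at ih
        omega
  have hecover : ∀ z, f z = -1 → ∃ b, e b = z := by
    intro z hz
    by_contra hnc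
    push_neg at hnc
    have hlt : ∀ b, e b < z := by
      intro b
      induction b with
      | zero =>
          have h1 : e 0 ≤ z := by
            rw [he0]
            apply hgmin
            refine ⟨hz, ?_⟩
            by_contra hcon
            have := hN2 z (by omega)
            omega
          have := hnc 0
          omega
      | succ b ih =>
          have h1 : e (b+1) ≤ z := by
            rw [hesucc]
            exact hgmin _ z ⟨hz, by omega⟩
          have := hnc (b+1)
          omega
    have h1 := hlt ((z - e 0).toNat + 1)
    have h2 := hgrow 0 ((z - e 0).toNat + 1)
    have h3 := hlt 0
    simp only [Nat.zero_add] at h2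
    push_cast at h2
    omega
  have hcount : ∀ b : ℕ, {j : ℤ | j < e b ∧ f j = -1}.ncard = b := by
    intro b
    have himg : {j : ℤ | j < e b ∧ f j = -1} = e '' {b' : ℕ | b' < b} := by
      ext z
      simp only [Set.mem_setOf_eq, Set.mem_image]
      constructor
      · rintro ⟨h1, h2⟩
        obtain ⟨b', hb'⟩ := hecover z h2
        refine ⟨b', ?_, hb'⟩
        rw [← hb'] at h1
        exact hemono.lt_iff_lt.mp h1
      · rintro ⟨b', hb', rfl⟩
        exact ⟨hemono hb', hemem b'⟩
    rw [himg, Set.ncard_image_of_injective _ hemono.injective,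
      show {b' : ℕ | b' < b} = ↑(Finset.range b) by ext; simp,
      Set.ncard_coe_finset, Finset.card_range]
  have hd0count : ({j : ℤ | j < d0 ∧ f j = -1}.ncard : ℤ) = d0 := by
    have hcc := charge_count f hf d0
    have hB : {j : ℤ | d0 ≤ j ∧ f j = 1} = ∅ := by
      ext j
      simp only [Set.mem_setOf_eq, Set.mem_empty_iff_false, iff_false, not_and]
      intro hj
      have := hN1 j (by omega)
      omega
    rw [hB, hc] at hcc
    simp at hcc
    omega
  set K : ℕ := d0.toNat with hK
  have hKd0 : (K : ℤ) = d0 := by omega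
  have heK : e K = d0 := by
    rcases lt_trichotomy (e K) d0 with h | h | h
    · exfalso
      have hsub : insert (e K) {j : ℤ | j < e K ∧ f j = -1} ⊆ {j : ℤ | j < d0 ∧ f j = -1} := by
        intro z hz
        rcases Set.mem_insert_iff.mp hz with h1 | h1
        · subst h1; exact ⟨h, hemem K⟩
        · exact ⟨by have := h1.1; omega, h1.2⟩
      have hle := Set.ncard_le_ncard hsub (charge_finA f hf d0)
      rw [Set.ncard_insert_of_notMem (by simp) (charge_finA f hf (e K)), hcount K] at hle
      omega
    · exact h
    · exfalso
      have hsub : insert d0 {j : ℤ | j < d0 ∧ f j = -1} ⊆ {j : ℤ | j < e K ∧ f j = -1} := by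
        intro z hz
        rcases Set.mem_insert_iff.mp hz with h1 | h1
        · subst h1
          exact ⟨h, hN1 _ (by omega)⟩
        · exact ⟨by have := h1.1; omega, h1.2⟩
      have hle := Set.ncard_le_ncard hsub (charge_finA f hf (e K))
      rw [Set.ncard_insert_of_notMem (by simp) (charge_finA f hf d0), hcount K] at hle
      omega
  have heabove : ∀ n : ℕ, e (K + n) = d0 + n := by
    intro n
    induction n with
    | zero => simpa using heK
    | succ n ih =>
        have h1 : e (K + n + 1) = g (e (K + n) + 1) := hesucc _
        have h3 : g (e (K+n) + 1) ≤ d0 + n + 1 := by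
          apply hgmin
          rw [ih]
          exact ⟨hN1 _ (by omega), by omega⟩
        have h4 := (hg (e (K+n)+1)).2
        have h5 : (K + (n+1) : ℕ) = (K + n) + 1 := rfl
        rw [h5, h1]
        push_cast
        push_cast at h3 h4
        omega
  have hele : ∀ b : ℕ, e b ≤ b := by
    intro b
    rcases le_or_gt K b with h | h
    · have h1 := heabove (b - K)
      rw [show K + (b - K) = b by omega] at h1
      omega
    · have h2 := hgrow b (K - b)
      rw [show b + (K - b) = K by omega, heK] at h2
      omega
  set p : ℕ → ℕ := fun b => ((b : ℤ) - e b).toNat with hp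
  have hanti : ∀ a b : ℕ, a ≤ b → p b ≤ p a := by
    intro a b hab
    have h2 := hgrow a (b - a)
    rw [show a + (b - a) = b by omega] at h2
    simp only [hp]
    omega
  have hev : ∃ N, ∀ n, N ≤ n → p n = 0 := by
    refine ⟨K, fun n hn => ?_⟩
    have h1 := heabove (n - K)
    rw [show K + (n - K) = n by omega] at h1
    show ((n : ℤ) - e n).toNat = 0
    omega
  refine ⟨⟨p, hanti, hev⟩, ?_⟩
  set ν : PartitionSeq := ⟨p, hanti, hev⟩ with hνdef
  have hebd : ∀ b, ebd ν b = e b := by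
    intro b
    have h2 := hele b
    show (b : ℤ) - (((b : ℤ) - e b).toNat : ℕ) = e b
    omega
  funext j
  rcases hval j with hfj | hfj
  · rw [hfj, mayaFun_eq_one_iff]
    intro b hb
    rw [hebd b] at hb
    have h1 := hemem b
    rw [← hb] at h1
    omega
  · rw [hfj, mayaFun_eq_neg_one_iff]
    obtain ⟨b, hb⟩ := hecover j hfj
    exact ⟨b, by rw [hebd b, hb]⟩

end Wreath
namespace Wreath
attribute [local instance] Classical.propDecidable

lemma partitionOfMaya_spec (f : ℤ → ℤ) (hf : IsMayaFun f) (hc : chargeFun f = 0) :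
    mayaFun (partitionOfMaya f) = f := by
  have h : ∃ lam : PartitionSeq, mayaFun lam = f := maya_realizable f hf hc
  rw [partitionOfMaya, dif_pos h]
  exact h.choose_spec

lemma res_calc {ℓ : ℕ} (hl : 1 ≤ ℓ) {i : ℕ} (hi : i < ℓ) (q : ℤ) :
    ((i : ℤ) + q * ℓ) % (ℓ : ℤ) = i ∧ ((i : ℤ) + q * ℓ) / (ℓ : ℤ) = q := by
  have h1 : ((i : ℤ) + q * ℓ) % (ℓ : ℤ) = (i : ℤ) % ℓ := Int.add_mul_emod_self_right _ _ _
  have h2 : (i : ℤ) % ℓ = i := Int.emod_eq_of_lt (by positivity) (by exact_mod_cast hi)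
  have h3 : ((i : ℤ) + q * ℓ) / (ℓ : ℤ) = (i : ℤ) / ℓ + q := by
    rw [Int.add_mul_ediv_right _ _ (by exact_mod_cast (by omega : ℓ ≠ 0) : (ℓ:ℤ) ≠ 0)]
  have h4 : (i : ℤ) / (ℓ : ℤ) = 0 := Int.ediv_eq_zero_of_lt (by positivity) (by exact_mod_cast hi)
  exact ⟨by rw [h1, h2], by rw [h3, h4]; ring⟩

lemma chargeQuot_def (ℓ : ℕ) (lam : PartitionSeq) (i : ℤ) :
    chargeQuot ℓ lam i = chargeFun (fun q => mayaFun lam (i + q * ℓ)) := rfl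

lemma isMayaFun_quotfun (ℓ : ℕ) (hl : 1 ≤ ℓ) (lam : PartitionSeq) {i : ℤ} (hi : 0 ≤ i) :
    IsMayaFun (fun q => mayaFun lam (i + (q - chargeQuot ℓ lam i) * ℓ)) := by
  have h1 := isMayaFun_res (mayaFun lam) (isMayaFun_mayaFun lam) hl hi
  exact isMayaFun_shift _ h1 (chargeQuot ℓ lam i)

lemma chargeFun_quotfun (ℓ : ℕ) (hl : 1 ≤ ℓ) (lam : PartitionSeq) {i : ℤ} (hi : 0 ≤ i) :
    chargeFun (fun q => mayaFun lam (i + (q - chargeQuot ℓ lam i) * ℓ)) = 0 := by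
  have h1 := isMayaFun_res (mayaFun lam) (isMayaFun_mayaFun lam) hl hi
  have h2 := chargeFun_shift (fun q => mayaFun lam (i + q * ℓ)) h1 (chargeQuot ℓ lam i)
  rw [← chargeQuot_def] at h2
  rw [h2]
  omega

lemma mayaFun_quotComp (ℓ : ℕ) (hl : 1 ≤ ℓ) (lam : PartitionSeq) {i : ℤ} (hi : 0 ≤ i) :
    mayaFun (quotComp ℓ lam i)
      = fun q => mayaFun lam (i + (q - chargeQuot ℓ lam i) * ℓ) := by
  rw [quotComp]
  exact partitionOfMaya_spec _ (isMayaFun_quotfun ℓ hl lam hi) (chargeFun_quotfun ℓ hl lam hi)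

/-- The defining function of the core. -/
noncomputable def fcore (ℓ : ℕ) (lam : PartitionSeq) : ℤ → ℤ := fun j =>
  if -(chargeQuot ℓ lam (j % (ℓ : ℤ))) ≤ j / (ℓ : ℤ) then -1 else 1

lemma coreOf_def (ℓ : ℕ) (lam : PartitionSeq) : coreOf ℓ lam = partitionOfMaya (fcore ℓ lam) := rfl

lemma sum_chargeQuot (ℓ : ℕ) (hl : 1 ≤ ℓ) (lam : PartitionSeq) :
    ∑ i ∈ Finset.range ℓ, chargeQuot ℓ lam (i : ℤ) = 0 := by
  have h := chargeFun_residue hl (mayaFun lam) (isMayaFun_mayaFun lam)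
  rw [chargeFun_mayaFun lam] at h
  exact h.symm

lemma isMayaFun_fcore (ℓ : ℕ) (hl : 1 ≤ ℓ) (lam : PartitionSeq) : IsMayaFun (fcore ℓ lam) := by
  have hl' : (0:ℤ) < (ℓ:ℤ) := by exact_mod_cast hl
  refine ⟨fun j => by unfold fcore; split_ifs <;> simp, ?_, ?_⟩
  · set B : ℕ := (Finset.range ℓ).sup (fun i => (-(chargeQuot ℓ lam (i:ℤ))).toNat) with hB
    refine ⟨(ℓ : ℤ) * B, fun j hj => ?_⟩
    unfold fcore
    have h0 : 0 ≤ j % (ℓ:ℤ) := Int.emod_nonneg j (by omega)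
    have h1 : j % (ℓ:ℤ) < ℓ := Int.emod_lt_of_pos j hl'
    have hmem : (j % (ℓ:ℤ)).toNat ∈ Finset.range ℓ := by
      simp only [Finset.mem_range]
      omega
    have hle : (-(chargeQuot ℓ lam (((j % (ℓ:ℤ)).toNat : ℕ) : ℤ))).toNat ≤ B :=
      Finset.le_sup (f := fun i : ℕ => (-(chargeQuot ℓ lam (i:ℤ))).toNat) hmem
    have hcast : (((j % (ℓ:ℤ)).toNat : ℕ) : ℤ) = j % (ℓ:ℤ) := by omega
    rw [hcast] at hle
    have hdiv : (B : ℤ) ≤ j / (ℓ:ℤ) := by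
      rw [Int.le_ediv_iff_mul_le hl']
      calc (B:ℤ) * ℓ = (ℓ:ℤ) * B := by ring
        _ ≤ j := hj
    exact if_pos (by omega)
  · set B : ℕ := (Finset.range ℓ).sup (fun i => (chargeQuot ℓ lam (i:ℤ)).toNat) with hB
    refine ⟨-((ℓ : ℤ) * (B + 1)), fun j hj => ?_⟩
    unfold fcore
    have h0 : 0 ≤ j % (ℓ:ℤ) := Int.emod_nonneg j (by omega)
    have h1 : j % (ℓ:ℤ) < ℓ := Int.emod_lt_of_pos j hl'
    have hmem : (j % (ℓ:ℤ)).toNat ∈ Finset.range ℓ := by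
      simp only [Finset.mem_range]
      omega
    have hle : ((chargeQuot ℓ lam (((j % (ℓ:ℤ)).toNat : ℕ) : ℤ))).toNat ≤ B :=
      Finset.le_sup (f := fun i : ℕ => ((chargeQuot ℓ lam (i:ℤ))).toNat) hmem
    have hcast : (((j % (ℓ:ℤ)).toNat : ℕ) : ℤ) = j % (ℓ:ℤ) := by omega
    rw [hcast] at hle
    have hdiv : j / (ℓ:ℤ) ≤ -((B:ℤ) + 1) := by
      have h2 : j / (ℓ:ℤ) ≤ (-((ℓ : ℤ) * (B + 1))) / ℓ := Int.ediv_le_ediv hl' hj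
      have h3 : (-((ℓ : ℤ) * (B + 1))) / ℓ = -((B:ℤ)+1) := by
        rw [show (-((ℓ : ℤ) * (B + 1))) = (ℓ:ℤ) * (-((B:ℤ)+1)) by ring]
        exact Int.mul_ediv_cancel_left _ (by omega)
      omega
    exact if_neg (by omega)

lemma chargeFun_step (c : ℤ) : chargeFun (fun q : ℤ => if -c ≤ q then (-1 : ℤ) else 1) = c := by
  have hA : {q : ℤ | q < 0 ∧ (if -c ≤ q then (-1:ℤ) else 1) = -1} = ↑(Finset.Ico (-c) (0:ℤ)) := by
    ext q
    simp only [Set.mem_setOf_eq, Finset.coe_Ico, Set.mem_Ico]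
    by_cases h : -c ≤ q
    · simp only [if_pos h]
      constructor
      · rintro ⟨h1, _⟩; exact ⟨h, h1⟩
      · rintro ⟨_, h1⟩; exact ⟨h1, trivial⟩
    · simp only [if_neg h]
      constructor
      · rintro ⟨_, hbad⟩; norm_num at hbad
      · rintro ⟨h1, _⟩; exact absurd h1 h
  have hB : {q : ℤ | 0 ≤ q ∧ (if -c ≤ q then (-1:ℤ) else 1) = 1} = ↑(Finset.Ico (0:ℤ) (-c)) := by
    ext q
    simp only [Set.mem_setOf_eq, Finset.coe_Ico, Set.mem_Ico]
    by_cases h : -c ≤ q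
    · simp only [if_pos h]
      constructor
      · rintro ⟨_, hbad⟩; norm_num at hbad
      · rintro ⟨_, h2⟩; omega
    · simp only [if_neg h]
      constructor
      · rintro ⟨h1, _⟩; refine ⟨h1, by omega⟩
      · rintro ⟨h1, _⟩; exact ⟨h1, trivial⟩
  rw [chargeFun, hA, hB, Set.ncard_coe_finset, Set.ncard_coe_finset, Int.card_Ico, Int.card_Ico]
  omega

lemma fcore_res {ℓ : ℕ} (hl : 1 ≤ ℓ) (lam : PartitionSeq) {i : ℕ} (hi : i < ℓ) (q : ℤ) :
    fcore ℓ lam ((i : ℤ) + q * ℓ)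
      = if -(chargeQuot ℓ lam (i : ℤ)) ≤ q then -1 else 1 := by
  obtain ⟨h1, h2⟩ := res_calc hl hi q
  unfold fcore
  rw [h1, h2]

lemma chargeFun_fcore (ℓ : ℕ) (hl : 1 ≤ ℓ) (lam : PartitionSeq) :
    chargeFun (fcore ℓ lam) = 0 := by
  have h := chargeFun_residue hl (fcore ℓ lam) (isMayaFun_fcore ℓ hl lam)
  rw [h]
  have : ∀ i ∈ Finset.range ℓ, chargeFun (fun q => fcore ℓ lam ((i:ℤ) + q * ℓ))
      = chargeQuot ℓ lam (i : ℤ) := by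
    intro i hi
    have hfun : (fun q => fcore ℓ lam ((i:ℤ) + q * ℓ))
        = fun q : ℤ => if -(chargeQuot ℓ lam (i : ℤ)) ≤ q then (-1:ℤ) else 1 := by
      funext q
      exact fcore_res hl lam (Finset.mem_range.mp hi) q
    rw [hfun, chargeFun_step]
  rw [Finset.sum_congr rfl this]
  exact sum_chargeQuot ℓ hl lam

lemma mayaFun_coreOf (ℓ : ℕ) (hl : 1 ≤ ℓ) (lam : PartitionSeq) :
    mayaFun (coreOf ℓ lam) = fcore ℓ lam := by
  rw [coreOf_def]
  exact partitionOfMaya_spec _ (isMayaFun_fcore ℓ hl lam) (chargeFun_fcore ℓ hl lam)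

lemma chargeQuot_eq_of_core {ℓ : ℕ} (hl : 1 ≤ ℓ) {lam mu : PartitionSeq}
    (hcore : coreOf ℓ lam = coreOf ℓ mu) {i : ℕ} (hi : i < ℓ) :
    chargeQuot ℓ lam (i : ℤ) = chargeQuot ℓ mu (i : ℤ) := by
  have h1 : fcore ℓ lam = fcore ℓ mu := by
    rw [← mayaFun_coreOf ℓ hl lam, ← mayaFun_coreOf ℓ hl mu, hcore]
  set a := chargeQuot ℓ lam (i : ℤ)
  set b := chargeQuot ℓ mu (i : ℤ)
  have h2 : ∀ q : ℤ, (if -a ≤ q then (-1:ℤ) else 1) = (if -b ≤ q then (-1:ℤ) else 1) := by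
    intro q
    rw [← fcore_res hl lam hi q, ← fcore_res hl mu hi q, h1]
  by_contra hne
  rcases lt_or_gt_of_ne hne with h | h
  · have h3 := h2 (-b)
    rw [if_neg (show ¬ (-a ≤ -b) by omega)] at h3
    rw [if_pos (le_refl (-b))] at h3
    norm_num at h3
  · have h3 := h2 (-a)
    rw [if_pos (le_refl (-a))] at h3
    rw [if_neg (show ¬ (-b ≤ -a) by omega)] at h3
    norm_num at h3

end Wreath
namespace Wreath
attribute [local instance] Classical.propDecidable

noncomputable def Gf (ν : PartitionSeq) (t : ℤ) (n : ℕ) : ℕ :=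
  ∑ b ∈ Finset.range n, ((ν.part b : ℤ) - b - t).toNat

lemma Gf_term_zero (ν : PartitionSeq) {t : ℤ} {b : ℕ} (hb : nzero ν ≤ b) (hb2 : -t ≤ (b : ℤ)) :
    ((ν.part b : ℤ) - b - t).toNat = 0 := by
  rw [nzero_spec ν hb]
  omega

lemma Gf_stable (ν : PartitionSeq) (t : ℤ) {n n' : ℕ}
    (hn : max (nzero ν) (-t).toNat ≤ n) (h : n ≤ n') : Gf ν t n' = Gf ν t n := by
  rw [Gf, Gf]
  symm
  apply Finset.sum_subset (Finset.range_subset_range.mpr h)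
  intro b hb hbn
  simp only [Finset.mem_range, not_lt] at hbn
  apply Gf_term_zero
  · omega
  · omega

lemma Gf_ge (ν : PartitionSeq) (t : ℤ) (k : ℕ) {n : ℕ} (hk : k ≤ n) :
    (∑ b ∈ Finset.range k, (ν.part b : ℤ)) - (∑ b ∈ Finset.range k, ((b : ℤ) + t))
      ≤ (Gf ν t n : ℤ) := by
  have h1 : (∑ b ∈ Finset.range k, (((ν.part b : ℤ) - b - t).toNat : ℤ)) ≤ (Gf ν t n : ℤ) := by
    rw [Gf]
    push_cast
    apply Finset.sum_le_sum_of_subset_of_nonneg (Finset.range_subset_range.mpr hk)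
    intro b _ _
    positivity
  refine le_trans ?_ h1
  rw [← Finset.sum_sub_distrib]
  apply Finset.sum_le_sum
  intro b _
  have := Int.self_le_toNat ((ν.part b : ℤ) - b - t)
  omega

lemma Gf_exists_k (ν : PartitionSeq) (t : ℤ) {n : ℕ} (hn : max (nzero ν) ((-t).toNat) ≤ n) :
    ∃ k ≤ n, (Gf ν t n : ℤ)
      = (∑ b ∈ Finset.range k, (ν.part b : ℤ)) - (∑ b ∈ Finset.range k, ((b : ℤ) + t)) := by
  classical
  set s : Finset ℕ := (Finset.range n).filter (fun b => 0 < (ν.part b : ℤ) - b - t) with hs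
  have hdc : ∀ a b : ℕ, a ≤ b → b ∈ (↑s : Set ℕ) → a ∈ (↑s : Set ℕ) := by
    intro a b hab hb
    simp only [hs, Finset.coe_filter, Set.mem_setOf_eq, Finset.mem_range] at hb ⊢
    obtain ⟨h1, h2⟩ := hb
    have h3 := ν.antitone a b hab
    refine ⟨by omega, by push_cast; push_cast at h2; omega⟩
  have hchar : ∀ m : ℕ, m ∈ s ↔ m < s.card := by
    intro m
    have := mem_iff_lt_ncard (s := (↑s : Set ℕ)) (s.finite_toSet) hdc m
    rw [Set.ncard_coe_finset] at this
    simpa using this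
  have hrange : s = Finset.range s.card := by
    ext m
    rw [Finset.mem_range, hchar]
  refine ⟨s.card, ?_, ?_⟩
  · have : s ⊆ Finset.range n := Finset.filter_subset _ _
    have := Finset.card_le_card this
    simpa using this
  · have hzero : ∀ b ∈ Finset.range n, b ∉ s → (((ν.part b : ℤ) - b - t).toNat : ℤ) = 0 := by
      intro b hb hbs
      simp only [hs, Finset.mem_filter, not_and] at hbs
      have := hbs hb
      omega
    have h1 : (Gf ν t n : ℤ) = ∑ b ∈ s, (((ν.part b : ℤ) - b - t).toNat : ℤ) := by
      rw [Gf]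
      push_cast
      symm
      apply Finset.sum_subset (Finset.filter_subset _ _)
      intro b hb hbs
      have := hzero b hb hbs
      omega
    have h2 : ∀ b ∈ s, (((ν.part b : ℤ) - b - t).toNat : ℤ) = (ν.part b : ℤ) - b - t := by
      intro b hb
      simp only [hs, Finset.mem_filter] at hb
      omega
    rw [h1, Finset.sum_congr rfl h2, ← hrange, ← Finset.sum_sub_distrib]
    exact Finset.sum_congr rfl (fun x _ => by ring)

lemma Gf_at_cut (ν : PartitionSeq) (k : ℕ) {n : ℕ} (hk : k ≤ n) :
    (Gf ν ((ν.part k : ℤ) - k) n : ℤ)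
      = (∑ b ∈ Finset.range k, (ν.part b : ℤ))
        - (∑ b ∈ Finset.range k, ((b : ℤ) + ((ν.part k : ℤ) - k))) := by
  set t : ℤ := (ν.part k : ℤ) - k with ht
  have h1 : (Gf ν t n : ℤ) = ∑ b ∈ Finset.range k, (((ν.part b : ℤ) - b - t).toNat : ℤ) := by
    rw [Gf]
    push_cast
    symm
    apply Finset.sum_subset (Finset.range_subset_range.mpr hk)
    intro b hb hbk
    simp only [Finset.mem_range, not_lt] at hbk
    have h2 := ν.antitone k b hbk
    have : (ν.part b : ℤ) - b - t ≤ 0 := by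
      rw [ht]
      push_cast
      omega
    omega
  have h2 : ∀ b ∈ Finset.range k, (((ν.part b : ℤ) - b - t).toNat : ℤ) = (ν.part b : ℤ) - b - t := by
    intro b hb
    simp only [Finset.mem_range] at hb
    have h3 := ν.antitone b k (le_of_lt hb)
    have : 0 ≤ (ν.part b : ℤ) - b - t := by
      rw [ht]
      push_cast
      omega
    omega
  rw [h1, Finset.sum_congr rfl h2, ← Finset.sum_sub_distrib]
  exact Finset.sum_congr rfl (fun x _ => by ring)

/-- Dominance of partial sums implies comparison of the `Gf` statistics. -/
lemma Gf_le_of_sums (α β : PartitionSeq)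
    (hS : ∀ k : ℕ, (∑ b ∈ Finset.range k, β.part b) ≤ ∑ b ∈ Finset.range k, α.part b)
    (t : ℤ) {n m : ℕ} (hn : max (nzero β) ((-t).toNat) ≤ n)
    (hm : max (nzero α) ((-t).toNat) ≤ m) :
    Gf β t n ≤ Gf α t m := by
  obtain ⟨k, hk, hkeq⟩ := Gf_exists_k β t hn
  have h1 := Gf_ge α t k (le_max_right m k)
  have h2 : Gf α t (max m k) = Gf α t m := Gf_stable α t hm (le_max_left m k)
  rw [h2] at h1
  have h3 : (∑ b ∈ Finset.range k, (β.part b : ℤ)) ≤ ∑ b ∈ Finset.range k, (α.part b : ℤ) := by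
    have := hS k
    push_cast
    exact_mod_cast this
  omega

/-- Comparison of `Gf` implies dominance of partial sums. -/
lemma sums_le_of_Gf (α β : PartitionSeq)
    (hG : ∀ t : ℤ, ∀ n m : ℕ, max (nzero β) ((-t).toNat) ≤ n →
      max (nzero α) ((-t).toNat) ≤ m → Gf β t n ≤ Gf α t m)
    (k : ℕ) : (∑ b ∈ Finset.range k, β.part b) ≤ ∑ b ∈ Finset.range k, α.part b := by
  set t : ℤ := (α.part k : ℤ) - k with ht
  have h1 := Gf_at_cut α k (le_sup_right : k ≤ max (nzero α) ((-t).toNat) ⊔ k)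
  rw [← ht] at h1
  have h2 := Gf_ge β t k (le_sup_right : k ≤ max (nzero β) ((-t).toNat) ⊔ k)
  have h3 := hG t (max (nzero β) ((-t).toNat) ⊔ k) (max (nzero α) ((-t).toNat) ⊔ k)
    le_sup_left le_sup_left
  have h4 : (∑ b ∈ Finset.range k, (β.part b : ℤ)) ≤ ∑ b ∈ Finset.range k, (α.part b : ℤ) := by
    have hc : (Gf β t (max (nzero β) ((-t).toNat) ⊔ k) : ℤ)
        ≤ (Gf α t (max (nzero α) ((-t).toNat) ⊔ k) : ℤ) := by exact_mod_cast h3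
    omega
  exact_mod_cast h4

/-- `size` is the sum of the parts. -/
lemma size_eq_sum (ν : PartitionSeq) {n : ℕ} (hn : nzero ν ≤ n) :
    Partition.size ν = ∑ b ∈ Finset.range n, ν.part b := by
  classical
  set F : Finset (ℤ × ℤ) := (Finset.range n).biUnion
    (fun b => (Finset.Icc (1 : ℤ) (ν.part b)).image (fun a => (a, (b : ℤ) + 1))) with hF
  have hset : {x : ℤ × ℤ | Partition.memYD ν x} = ↑F := by
    rw [hF]
    ext x
    simp only [Set.mem_setOf_eq, Finset.mem_coe, Finset.mem_biUnion,
      Finset.mem_image, Finset.mem_Icc, Finset.mem_range, Partition.memYD]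
    constructor
    · rintro ⟨h1, h2, h3⟩
      refine ⟨(x.2 - 1).toNat, ?_, x.1, ⟨h1, h3⟩, ?_⟩
      · by_contra hc
        push_neg at hc
        rw [nzero_spec ν (le_trans hn hc)] at h3
        omega
      · have : ((x.2 - 1).toNat : ℤ) + 1 = x.2 := by omega
        rw [this]
    · rintro ⟨b, hb, a, ⟨ha1, ha2⟩, rfl⟩
      refine ⟨ha1, by omega, ?_⟩
      have : ((b : ℤ) + 1 - 1).toNat = b := by omega
      simp only [this]
      exact ha2
  rw [Partition.size, hset, Set.ncard_coe_finset, hF, Finset.card_biUnion]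
  · apply Finset.sum_congr rfl
    intro b _
    rw [Finset.card_image_of_injective _ (fun a1 a2 hx => by
      simpa using (Prod.ext_iff.mp hx).1), Int.card_Icc]
    omega
  · intro b1 h1 b2 h2 hne
    rw [Function.onFun, Finset.disjoint_left]
    intro x hx1 hx2
    simp only [Finset.mem_image, Finset.mem_Icc] at hx1 hx2
    obtain ⟨a1, _, rfl⟩ := hx1
    obtain ⟨a2, _, hx⟩ := hx2
    have := (Prod.ext_iff.mp hx).2
    simp only at this
    apply hne
    have : (b2 : ℤ) = b1 := by omega
    omega

lemma tf_filter (ν : PartitionSeq) {m : ℤ} {n : ℕ} (hn : nzero ν ≤ n) (hm : m ≤ (n : ℤ)) :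
    tf ν m = ((Finset.range n).filter (fun b => ebd ν b < m)).card := by
  rw [tf]
  have hs : {b : ℕ | ebd ν b < m} = ↑((Finset.range n).filter (fun b => ebd ν b < m)) := by
    ext b
    simp only [Set.mem_setOf_eq, Finset.coe_filter, Finset.mem_range]
    constructor
    · intro hb
      refine ⟨?_, hb⟩
      by_contra hc
      push_neg at hc
      rw [ebd_eq_self ν (by omega)] at hb
      omega
    · rintro ⟨_, hb⟩
      exact hb
  rw [hs, Set.ncard_coe_finset]

/-- The tail-sum of `tf` equals `Gf`. -/
lemma tf_sum_eq_Gf (ν : PartitionSeq) {lo M : ℤ} (hlo : lo ≤ -(ν.part 0 : ℤ)) {n : ℕ}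
    (hn : nzero ν ≤ n) (hM : M ≤ (n : ℤ)) :
    ∑ m ∈ Finset.Icc lo M, tf ν m = Gf ν (-M) n := by
  classical
  have h1 : ∀ m ∈ Finset.Icc lo M, tf ν m
      = ∑ b ∈ Finset.range n, (if ebd ν b < m then 1 else 0) := by
    intro m hm
    simp only [Finset.mem_Icc] at hm
    rw [tf_filter ν hn (le_trans hm.2 hM)]
    rw [Finset.card_filter]
  rw [Finset.sum_congr rfl h1, Finset.sum_comm]
  apply Finset.sum_congr rfl
  intro b _
  have h2 : ∀ m ∈ Finset.Icc lo M, (if ebd ν b < m then (1:ℕ) else 0)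
      = if m ∈ Finset.Ioc (ebd ν b) M then 1 else 0 := by
    intro m hm
    simp only [Finset.mem_Icc] at hm
    simp only [Finset.mem_Ioc]
    by_cases h : ebd ν b < m
    · rw [if_pos h, if_pos ⟨h, hm.2⟩]
    · rw [if_neg h, if_neg (fun hc => h hc.1)]
  rw [Finset.sum_congr rfl h2, ← Finset.card_filter]
  have h3 : (Finset.Icc lo M).filter (fun m => m ∈ Finset.Ioc (ebd ν b) M)
      = Finset.Ioc (ebd ν b) M := by
    ext m
    simp only [Finset.mem_filter, Finset.mem_Icc, Finset.mem_Ioc]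
    constructor
    · rintro ⟨_, hb⟩; exact hb
    · rintro ⟨hb1, hb2⟩
      have := ebd_ge ν b
      exact ⟨⟨by omega, hb2⟩, ⟨hb1, hb2⟩⟩
  rw [h3, Int.card_Ioc]
  have : M - ebd ν b = (ν.part b : ℤ) - b - (-M) := by
    rw [ebd]; ring
  rw [this]

end Wreath
namespace Wreath
attribute [local instance] Classical.propDecidable

/-- `psi ℓ c i m` : least `q` with `m ≤ i + (q-c)ℓ`. -/
def psi (ℓ : ℕ) (c i m : ℤ) : ℤ := c - (i - m) / (ℓ : ℤ)

lemma lt_psi_iff {ℓ : ℕ} (hl : 1 ≤ ℓ) (c i m q : ℤ) :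
    q < psi ℓ c i m ↔ i + (q - c) * ℓ < m := by
  have hl' : (0 : ℤ) < (ℓ : ℤ) := by exact_mod_cast hl
  have h1 : q < psi ℓ c i m ↔ (i - m) / (ℓ:ℤ) ≤ c - q - 1 := by
    unfold psi; omega
  have h2 : (i - m) / (ℓ:ℤ) ≤ c - q - 1 ↔ ¬ ((c - q) ≤ (i - m) / (ℓ:ℤ)) := by omega
  rw [h1, h2, Int.le_ediv_iff_mul_le hl']
  constructor
  · intro h; nlinarith [h]
  · intro h; nlinarith [h]

lemma psi_le_iff {ℓ : ℕ} (hl : 1 ≤ ℓ) (c i m q : ℤ) :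
    psi ℓ c i m ≤ q ↔ m ≤ i + (q - c) * ℓ := by
  have := lt_psi_iff hl c i m q
  omega

lemma psi_mono {ℓ : ℕ} (hl : 1 ≤ ℓ) (c i : ℤ) {m m' : ℤ} (h : m ≤ m') :
    psi ℓ c i m ≤ psi ℓ c i m' := by
  rw [psi_le_iff hl]
  have := (psi_le_iff hl c i m' (psi ℓ c i m')).mp (le_refl _)
  omega

lemma psi_edge {ℓ : ℕ} (hl : 1 ≤ ℓ) (c i q : ℤ) :
    psi ℓ c i (i + (q - c) * ℓ) = q := by
  have h1 := (psi_le_iff hl c i (i + (q - c) * ℓ) q).mpr (le_refl _)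
  have h2 := (lt_psi_iff hl c i (i + (q - c) * ℓ) (q - 1))
  have hl' : (1 : ℤ) ≤ (ℓ : ℤ) := by exact_mod_cast hl
  have h3 : i + (q - 1 - c) * ℓ < i + (q - c) * ℓ := by nlinarith
  have h4 := h2.mpr h3
  omega

/-- Pointwise decomposition of `tf` over the `ℓ`-quotient. -/
lemma tf_decomp (ℓ : ℕ) (hl : 1 ≤ ℓ) (lam : PartitionSeq) (m : ℤ) :
    (tf lam m : ℤ) = ∑ i ∈ Finset.range ℓ,
      (tf (quotComp ℓ lam (i : ℤ)) (psi ℓ (chargeQuot ℓ lam (i : ℤ)) (i : ℤ) m) : ℤ) := by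
  have h0 : tf lam m = {j : ℤ | j < m ∧ mayaFun lam j = -1}.ncard := tf_eq_ncard_maya lam m
  have hres := ncard_residue hl (fun j => j < m ∧ mayaFun lam j = -1)
    (charge_finA (mayaFun lam) (isMayaFun_mayaFun lam) m)
  have hterm : ∀ i ∈ Finset.range ℓ,
      ({q : ℤ | (i:ℤ) + q * ℓ < m ∧ mayaFun lam ((i:ℤ) + q * ℓ) = -1}.ncard : ℤ)
        = (tf (quotComp ℓ lam (i : ℤ)) (psi ℓ (chargeQuot ℓ lam (i : ℤ)) (i : ℤ) m) : ℤ) := by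
    intro i hi
    set c : ℤ := chargeQuot ℓ lam (i : ℤ) with hc
    have hq := mayaFun_quotComp ℓ hl lam (by positivity : (0:ℤ) ≤ (i:ℤ))
    have h1 : tf (quotComp ℓ lam (i : ℤ)) (psi ℓ c (i:ℤ) m)
        = {j : ℤ | j < psi ℓ c (i:ℤ) m ∧ mayaFun lam ((i:ℤ) + (j - c) * ℓ) = -1}.ncard := by
      rw [tf_eq_ncard_maya]
      congr 1
      ext j
      simp only [Set.mem_setOf_eq]
      rw [show mayaFun (quotComp ℓ lam (i:ℤ)) j = mayaFun lam ((i:ℤ) + (j - c) * ℓ) by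
        rw [hq]]
    have h2 : {q : ℤ | (i:ℤ) + q * ℓ < m ∧ mayaFun lam ((i:ℤ) + q * ℓ) = -1}
        = (fun j : ℤ => j - c) ''
          {j : ℤ | j < psi ℓ c (i:ℤ) m ∧ mayaFun lam ((i:ℤ) + (j - c) * ℓ) = -1} := by
      ext q
      simp only [Set.mem_setOf_eq, Set.mem_image]
      constructor
      · rintro ⟨h3, h4⟩
        refine ⟨q + c, ⟨?_, by simpa using h4⟩, by ring⟩
        rw [lt_psi_iff hl]
        simpa using h3
      · rintro ⟨j, ⟨h3, h4⟩, rfl⟩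
        rw [lt_psi_iff hl] at h3
        exact ⟨h3, h4⟩
    have hinj : Function.Injective (fun j : ℤ => j - c) := by
      intro a b hab
      simp only at hab
      omega
    rw [h1, h2, Set.ncard_image_of_injective _ hinj]
  rw [h0, hres]
  push_cast
  exact Finset.sum_congr rfl hterm

lemma fiber_const {ℓ : ℕ} (hl : 1 ≤ ℓ) (c i : ℤ) (d : ℤ → ℤ) (q : ℤ) {a b : ℤ}
    (hab : a ≤ b) (ha : i + ((q-1) - c) * ℓ ≤ a) (hb : b ≤ i + (q - c) * ℓ)
    (hlt : a < b ∨ psi ℓ c i a = q) :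
    ∑ m ∈ Finset.Ioc a b, d (psi ℓ c i m) = (b - a) * d q := by
  have hconst : ∀ m ∈ Finset.Ioc a b, d (psi ℓ c i m) = d q := by
    intro m hm
    simp only [Finset.mem_Ioc] at hm
    have h1 : psi ℓ c i m ≤ q := (psi_le_iff hl c i m q).mpr (by omega)
    have h2 : q - 1 < psi ℓ c i m := by
      rw [lt_psi_iff hl]
      omega
    have : psi ℓ c i m = q := by omega
    rw [this]
  rw [Finset.sum_congr rfl hconst, Finset.sum_const, Int.card_Ioc]
  have : ((b - a).toNat : ℤ) = b - a := by omega
  rw [nsmul_eq_mul]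
  rw [this]

lemma fiber_full {ℓ : ℕ} (hl : 1 ≤ ℓ) (c i : ℤ) (d : ℤ → ℤ) (q0 : ℤ) : ∀ n : ℕ,
    ∑ m ∈ Finset.Ioc (i + (q0 - c) * ℓ) (i + ((q0 + n) - c) * ℓ), d (psi ℓ c i m)
      = (ℓ : ℤ) * ∑ q ∈ Finset.Ioc q0 (q0 + (n:ℤ)), d q := by
  have hl' : (1:ℤ) ≤ (ℓ:ℤ) := by exact_mod_cast hl
  intro n
  induction n with
  | zero => simp
  | succ n ih =>
      have hmono : ∀ x y : ℤ, x ≤ y → i + (x - c) * ℓ ≤ i + (y - c) * ℓ := by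
        intro x y hxy; nlinarith
      have hsplit : Finset.Ioc (i + (q0 - c) * ℓ) (i + ((q0 + (n+1:ℕ)) - c) * ℓ)
          = Finset.Ioc (i + (q0 - c) * ℓ) (i + ((q0 + n) - c) * ℓ)
            ∪ Finset.Ioc (i + ((q0 + n) - c) * ℓ) (i + ((q0 + (n+1:ℕ)) - c) * ℓ) := by
        rw [Finset.Ioc_union_Ioc_eq_Ioc (hmono _ _ (by omega)) (hmono _ _ (by push_cast; omega))]
      have hdisj : Disjoint (Finset.Ioc (i + (q0 - c) * ℓ) (i + ((q0 + n) - c) * ℓ))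
          (Finset.Ioc (i + ((q0 + n) - c) * ℓ) (i + ((q0 + (n+1:ℕ)) - c) * ℓ)) := by
        rw [Finset.disjoint_left]
        intro x hx1 hx2
        simp only [Finset.mem_Ioc] at hx1 hx2
        omega
      rw [hsplit, Finset.sum_union hdisj, ih]
      have htop : ∑ m ∈ Finset.Ioc (i + ((q0 + n) - c) * ℓ) (i + ((q0 + (n+1:ℕ)) - c) * ℓ),
          d (psi ℓ c i m) = ((i + ((q0 + (n+1:ℕ)) - c) * ℓ) - (i + ((q0 + n) - c) * ℓ)) * d (q0 + n + 1) := by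
        apply fiber_const hl c i d (q0 + (n:ℤ) + 1) (hmono _ _ (by push_cast; omega))
        · apply le_of_eq; congr 1; push_cast; ring
        · apply le_of_eq; congr 1; push_cast; ring
        · left
          have : i + ((q0 + n) - c) * ℓ < i + ((q0 + (n+1:ℕ)) - c) * ℓ := by
            push_cast; nlinarith
          exact this
      rw [htop]
      have hIoc : Finset.Ioc q0 (q0 + ((n+1:ℕ):ℤ)) = Finset.Ioc q0 (q0 + (n:ℤ))
          ∪ Finset.Ioc (q0 + (n:ℤ)) (q0 + ((n+1:ℕ):ℤ)) := by
        rw [Finset.Ioc_union_Ioc_eq_Ioc (by omega) (by push_cast; omega)]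
      have hdisj2 : Disjoint (Finset.Ioc q0 (q0 + (n:ℤ)))
          (Finset.Ioc (q0 + (n:ℤ)) (q0 + ((n+1:ℕ):ℤ))) := by
        rw [Finset.disjoint_left]
        intro x hx1 hx2
        simp only [Finset.mem_Ioc] at hx1 hx2
        omega
      rw [hIoc, Finset.sum_union hdisj2]
      have hsing : Finset.Ioc (q0 + (n:ℤ)) (q0 + ((n+1:ℕ):ℤ)) = {q0 + (n:ℤ) + 1} := by
        ext x
        simp only [Finset.mem_Ioc, Finset.mem_singleton]
        push_cast
        omega
      rw [hsing, Finset.sum_singleton]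
      push_cast
      ring

/-- Exact evaluation of a fiberwise sum, with bottom fibers vanishing. -/
lemma fiber_formula {ℓ : ℕ} (hl : 1 ≤ ℓ) (c i : ℤ) (d : ℤ → ℤ) (lo M : ℤ)
    (hlM : lo - 1 ≤ M)
    (hvan : ∀ q, q ≤ psi ℓ c i (lo - 1) → d q = 0) :
    ∃ r : ℤ, 1 ≤ r ∧ r ≤ (ℓ:ℤ) ∧
      ∑ m ∈ Finset.Ioc (lo - 1) M, d (psi ℓ c i m)
        = (ℓ:ℤ) * (∑ q ∈ Finset.Ioc (psi ℓ c i (lo-1)) (psi ℓ c i M - 1), d q)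
          + r * (∑ q ∈ Finset.Ioc (psi ℓ c i (lo-1)) (psi ℓ c i M), d q
                 - ∑ q ∈ Finset.Ioc (psi ℓ c i (lo-1)) (psi ℓ c i M - 1), d q) := by
  have hl' : (1:ℤ) ≤ (ℓ:ℤ) := by exact_mod_cast hl
  set q0 : ℤ := psi ℓ c i (lo - 1) with hq0
  set qM : ℤ := psi ℓ c i M with hqM
  have hq0M : q0 ≤ qM := psi_mono hl c i (by omega)
  rcases eq_or_lt_of_le hq0M with heq | hlt
  · -- degenerate: everything constant q0, d q0 = 0
    refine ⟨1, le_refl _, hl', ?_⟩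
    have hconst : ∀ m ∈ Finset.Ioc (lo-1) M, d (psi ℓ c i m) = 0 := by
      intro m hm
      simp only [Finset.mem_Ioc] at hm
      apply hvan
      have h1 : psi ℓ c i m ≤ qM := psi_mono hl c i hm.2
      omega
    rw [Finset.sum_congr rfl hconst]
    have h2 : Finset.Ioc q0 (qM - 1) = ∅ := by
      apply Finset.Ioc_eq_empty
      omega
    have h3 : Finset.Ioc q0 qM = ∅ := by
      apply Finset.Ioc_eq_empty
      omega
    rw [h2, h3]
    simp
  · -- main case
    have hedge0 : lo - 1 ≤ i + (q0 - c) * ℓ := (psi_le_iff hl c i (lo-1) q0).mp (le_refl _)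
    have hedgeM1 : i + ((qM - 1) - c) * ℓ < M := by
      have := (lt_psi_iff hl c i M (qM - 1)).mp (by omega)
      exact this
    have hedgeM : M ≤ i + (qM - c) * ℓ := (psi_le_iff hl c i M qM).mp (le_refl _)
    have hmono : ∀ x y : ℤ, x ≤ y → i + (x - c) * ℓ ≤ i + (y - c) * ℓ := by
      intro x y hxy; nlinarith
    set E0 : ℤ := i + (q0 - c) * ℓ with hE0
    set E1 : ℤ := i + ((qM - 1) - c) * ℓ with hE1
    have hE0E1 : E0 ≤ E1 := hmono _ _ (by omega)
    have hE0M : E0 ≤ M := le_trans hE0E1 (le_of_lt hedgeM1)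
    -- split into three
    have hsplit1 : Finset.Ioc (lo-1) M = Finset.Ioc (lo-1) E0 ∪ Finset.Ioc E0 M :=
      (Finset.Ioc_union_Ioc_eq_Ioc hedge0 hE0M).symm
    have hsplit2 : Finset.Ioc E0 M = Finset.Ioc E0 E1 ∪ Finset.Ioc E1 M :=
      (Finset.Ioc_union_Ioc_eq_Ioc hE0E1 (le_of_lt hedgeM1)).symm
    have hdisj1 : Disjoint (Finset.Ioc (lo-1) E0) (Finset.Ioc E0 M) := by
      rw [Finset.disjoint_left]; intro x h1 h2
      simp only [Finset.mem_Ioc] at h1 h2; omega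
    have hdisj2 : Disjoint (Finset.Ioc E0 E1) (Finset.Ioc E1 M) := by
      rw [Finset.disjoint_left]; intro x h1 h2
      simp only [Finset.mem_Ioc] at h1 h2; omega
    -- part 1 : constant q0, vanishing
    have hpart1 : ∑ m ∈ Finset.Ioc (lo-1) E0, d (psi ℓ c i m) = 0 := by
      have hconst : ∀ m ∈ Finset.Ioc (lo-1) E0, d (psi ℓ c i m) = 0 := by
        intro m hm
        simp only [Finset.mem_Ioc] at hm
        apply hvan
        have := (psi_le_iff hl c i m q0).mpr (by omega)
        omega
      rw [Finset.sum_congr rfl hconst]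
      simp
    -- part 2 : full fibers
    have hpart2 : ∑ m ∈ Finset.Ioc E0 E1, d (psi ℓ c i m)
        = (ℓ:ℤ) * ∑ q ∈ Finset.Ioc q0 (qM - 1), d q := by
      have hn : ∃ n : ℕ, qM - 1 = q0 + n := ⟨(qM - 1 - q0).toNat, by omega⟩
      obtain ⟨n, hn⟩ := hn
      have hff := fiber_full hl c i d q0 n
      rw [hE0, hE1, hn]
      exact hff
    -- part 3 : top partial fiber
    have hpart3 : ∑ m ∈ Finset.Ioc E1 M, d (psi ℓ c i m) = (M - E1) * d qM := by
      have ha : i + ((qM - 1) - c) * ℓ ≤ E1 := le_of_eq (by rw [hE1])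
      exact fiber_const hl c i d qM (le_of_lt hedgeM1) ha hedgeM (Or.inl hedgeM1)
    have hE1M : i + (qM - c) * ℓ - E1 = ℓ := by rw [hE1]; ring
    refine ⟨M - E1, by omega, by omega, ?_⟩
    rw [hsplit1, Finset.sum_union hdisj1, hsplit2, Finset.sum_union hdisj2,
      hpart1, hpart2, hpart3]
    have hsingle : Finset.Ioc q0 qM = Finset.Ioc q0 (qM - 1) ∪ {qM} := by
      ext x
      simp only [Finset.mem_union, Finset.mem_Ioc, Finset.mem_singleton]
      omega
    have hdisj3 : Disjoint (Finset.Ioc q0 (qM - 1)) ({qM} : Finset ℤ) := by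
      rw [Finset.disjoint_left]; intro x h1 h2
      simp only [Finset.mem_Ioc] at h1
      simp only [Finset.mem_singleton] at h2
      omega
    rw [hsingle, Finset.sum_union hdisj3, Finset.sum_singleton]
    ring

end Wreath
namespace Wreath
attribute [local instance] Classical.propDecidable

lemma Gf_large (ν : PartitionSeq) {M : ℤ} (hM : (nzero ν : ℤ) ≤ M) :
    (Gf ν (-M) M.toNat : ℤ)
      = (∑ b ∈ Finset.range M.toNat, (ν.part b : ℤ))
        + ∑ b ∈ Finset.range M.toNat, (M - (b : ℤ)) := by
  rw [Gf]
  push_cast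
  rw [← Finset.sum_add_distrib]
  apply Finset.sum_congr rfl
  intro b hb
  simp only [Finset.mem_range] at hb
  omega

lemma tf_sum_eq_Gf' (ν : PartitionSeq) {q0 Q : ℤ} (h : q0 + 1 ≤ -(ν.part 0 : ℤ)) :
    ∑ q ∈ Finset.Ioc q0 Q, (tf ν q) = Gf ν (-Q) (max (nzero ν) Q.toNat) := by
  have hIcc : Finset.Ioc q0 Q = Finset.Icc (q0+1) Q := by
    ext x
    simp only [Finset.mem_Ioc, Finset.mem_Icc]
    omega
  rw [hIcc]
  have hQ : Q ≤ ((max (nzero ν) Q.toNat : ℕ) : ℤ) := by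
    have := le_max_right (nzero ν) Q.toNat
    omega
  exact tf_sum_eq_Gf ν (by omega) (le_max_left _ _) hQ

end Wreath
theorem quotient_dominance (ℓ : ℕ) (hℓ : 1 ≤ ℓ) (lam mu : PartitionSeq)
    (hcore : coreOf ℓ lam = coreOf ℓ mu)
    (h : ∀ i : ℕ, i < ℓ →
      Partition.size (quotComp ℓ lam (i : ℤ)) = Partition.size (quotComp ℓ mu (i : ℤ)) ∧
      Dom (quotComp ℓ mu (i : ℤ)) (quotComp ℓ lam (i : ℤ))) :
    Partition.size mu = Partition.size lam ∧ Dom mu lam := by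
  classical
  set L : ℕ → PartitionSeq := fun i => quotComp ℓ lam (i : ℤ) with hLdef
  set Mu : ℕ → PartitionSeq := fun i => quotComp ℓ mu (i : ℤ) with hMudef
  set c : ℕ → ℤ := fun i => chargeQuot ℓ lam (i : ℤ) with hcdef
  have hcmu : ∀ i : ℕ, i < ℓ → chargeQuot ℓ mu (i : ℤ) = c i := by
    intro i hi
    exact (chargeQuot_eq_of_core hℓ hcore hi).symm
  have hS : ∀ i : ℕ, i < ℓ → ∀ k : ℕ,
      (∑ b ∈ Finset.range k, (Mu i).part b) ≤ ∑ b ∈ Finset.range k, (L i).part b :=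
    fun i hi => (h i hi).2.2
  have hsz : ∀ i : ℕ, i < ℓ → Partition.size (L i) = Partition.size (Mu i) :=
    fun i hi => (h i hi).1
  have hGle : ∀ i : ℕ, i < ℓ → ∀ t : ℤ, ∀ n m : ℕ, max (nzero (Mu i)) ((-t).toNat) ≤ n →
      max (nzero (L i)) ((-t).toNat) ≤ m → Gf (Mu i) t n ≤ Gf (L i) t m :=
    fun i hi => Gf_le_of_sums (L i) (Mu i) (hS i hi)
  have hTpos : ∀ i : ℕ, i < ℓ → ∀ q0 Q : ℤ, q0 + 1 ≤ -((L i).part 0 : ℤ) →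
      q0 + 1 ≤ -((Mu i).part 0 : ℤ) →
      0 ≤ ∑ q ∈ Finset.Ioc q0 Q, ((tf (L i) q : ℤ) - (tf (Mu i) q : ℤ)) := by
    intro i hi q0 Q h1 h2
    have e1 := tf_sum_eq_Gf' (L i) (q0 := q0) (Q := Q) h1
    have e2 := tf_sum_eq_Gf' (Mu i) (q0 := q0) (Q := Q) h2
    have hcmp := hGle i hi (-Q) (max (nzero (Mu i)) Q.toNat) (max (nzero (L i)) Q.toNat)
      (by rw [neg_neg]) (by rw [neg_neg])
    rw [Finset.sum_sub_distrib]
    have e1' : (∑ q ∈ Finset.Ioc q0 Q, (tf (L i) q : ℤ))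
        = (Gf (L i) (-Q) (max (nzero (L i)) Q.toNat) : ℤ) := by exact_mod_cast e1
    have e2' : (∑ q ∈ Finset.Ioc q0 Q, (tf (Mu i) q : ℤ))
        = (Gf (Mu i) (-Q) (max (nzero (Mu i)) Q.toNat) : ℤ) := by exact_mod_cast e2
    omega
  have hTzero : ∀ i : ℕ, i < ℓ → ∀ q0 Q : ℤ, q0 + 1 ≤ -((L i).part 0 : ℤ) →
      q0 + 1 ≤ -((Mu i).part 0 : ℤ) →
      ((max (nzero (L i)) (nzero (Mu i)) : ℕ) : ℤ) ≤ Q →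
      ∑ q ∈ Finset.Ioc q0 Q, ((tf (L i) q : ℤ) - (tf (Mu i) q : ℤ)) = 0 := by
    intro i hi q0 Q h1 h2 hQ
    have e1 := tf_sum_eq_Gf' (L i) (q0 := q0) (Q := Q) h1
    have e2 := tf_sum_eq_Gf' (Mu i) (q0 := q0) (Q := Q) h2
    have hm1 : max (nzero (L i)) Q.toNat = Q.toNat := by omega
    have hm2 : max (nzero (Mu i)) Q.toNat = Q.toNat := by omega
    rw [hm1] at e1
    rw [hm2] at e2
    have g1 := Gf_large (L i) (show ((nzero (L i)) : ℤ) ≤ Q by omega)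
    have g2 := Gf_large (Mu i) (show ((nzero (Mu i)) : ℤ) ≤ Q by omega)
    have s1 := size_eq_sum (L i) (show nzero (L i) ≤ Q.toNat by omega)
    have s2 := size_eq_sum (Mu i) (show nzero (Mu i) ≤ Q.toNat by omega)
    have hsz' := hsz i hi
    rw [Finset.sum_sub_distrib]
    have e1' : (∑ q ∈ Finset.Ioc q0 Q, (tf (L i) q : ℤ)) = (Gf (L i) (-Q) Q.toNat : ℤ) := by
      exact_mod_cast e1
    have e2' : (∑ q ∈ Finset.Ioc q0 Q, (tf (Mu i) q : ℤ)) = (Gf (Mu i) (-Q) Q.toNat : ℤ) := by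
      exact_mod_cast e2
    have s1' : (Partition.size (L i) : ℤ) = ∑ b ∈ Finset.range Q.toNat, ((L i).part b : ℤ) := by
      exact_mod_cast s1
    have s2' : (Partition.size (Mu i) : ℤ) = ∑ b ∈ Finset.range Q.toNat, ((Mu i).part b : ℤ) := by
      exact_mod_cast s2
    have hsz'' : (Partition.size (L i) : ℤ) = (Partition.size (Mu i) : ℤ) := by exact_mod_cast hsz'
    omega
  have hA : ∀ m : ℤ, (tf lam m : ℤ)
      = ∑ i ∈ Finset.range ℓ, (tf (L i) (psi ℓ (c i) (i : ℤ) m) : ℤ) := by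
    intro m
    exact tf_decomp ℓ hℓ lam m
  have hB : ∀ m : ℤ, (tf mu m : ℤ)
      = ∑ i ∈ Finset.range ℓ, (tf (Mu i) (psi ℓ (c i) (i : ℤ) m) : ℤ) := by
    intro m
    rw [tf_decomp ℓ hℓ mu m]
    apply Finset.sum_congr rfl
    intro i hi
    rw [hcmu i (Finset.mem_range.mp hi)]
  set V : ℕ → ℤ := fun i => min (-((L i).part 0 : ℤ)) (-((Mu i).part 0 : ℤ)) with hVdef
  have hne : (Finset.range ℓ).Nonempty := ⟨0, Finset.mem_range.mpr (by omega)⟩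
  set lo0 : ℤ := min (min (-(lam.part 0 : ℤ)) (-(mu.part 0 : ℤ)))
    ((Finset.range ℓ).inf' hne (fun i => (i : ℤ) + ((V i - 1) - c i) * ℓ) + 1) with hlo0def
  have hlo0A : lo0 ≤ -(lam.part 0 : ℤ) := le_trans (min_le_left _ _) (min_le_left _ _)
  have hlo0B : lo0 ≤ -(mu.part 0 : ℤ) := le_trans (min_le_left _ _) (min_le_right _ _)
  have hlo0C : ∀ i : ℕ, i < ℓ → lo0 - 1 ≤ (i : ℤ) + ((V i - 1) - c i) * ℓ := by
    intro i hi
    have h1 : lo0 ≤ (Finset.range ℓ).inf' hne (fun i => (i : ℤ) + ((V i - 1) - c i) * ℓ) + 1 :=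
      min_le_right _ _
    have h2 : (Finset.range ℓ).inf' hne (fun i => (i : ℤ) + ((V i - 1) - c i) * ℓ)
        ≤ (i : ℤ) + ((V i - 1) - c i) * ℓ :=
      Finset.inf'_le _ (Finset.mem_range.mpr hi)
    omega
  have hkey : ∀ M lo : ℤ, lo ≤ M → lo ≤ lo0 →
      (0 ≤ ∑ q ∈ Finset.Ioc (lo - 1) M, ((tf lam q : ℤ) - (tf mu q : ℤ))) ∧
      ((∀ i : ℕ, i < ℓ →
          (i : ℤ) + (((max (nzero (L i)) (nzero (Mu i)) : ℕ) : ℤ) - c i) * ℓ < M) →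
        ∑ q ∈ Finset.Ioc (lo - 1) M, ((tf lam q : ℤ) - (tf mu q : ℤ)) = 0) := by
    intro M lo hloM hlolo0
    have hdec : ∑ q ∈ Finset.Ioc (lo - 1) M, ((tf lam q : ℤ) - (tf mu q : ℤ))
        = ∑ i ∈ Finset.range ℓ, ∑ q ∈ Finset.Ioc (lo - 1) M,
            ((tf (L i) (psi ℓ (c i) (i : ℤ) q) : ℤ)
              - (tf (Mu i) (psi ℓ (c i) (i : ℤ) q) : ℤ)) := by
      rw [Finset.sum_congr rfl (fun q _ => by
        rw [hA q, hB q, ← Finset.sum_sub_distrib] :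
        ∀ q ∈ Finset.Ioc (lo - 1) M, ((tf lam q : ℤ) - (tf mu q : ℤ))
          = ∑ i ∈ Finset.range ℓ, ((tf (L i) (psi ℓ (c i) (i : ℤ) q) : ℤ)
              - (tf (Mu i) (psi ℓ (c i) (i : ℤ) q) : ℤ)))]
      exact Finset.sum_comm
    have hper : ∀ i : ℕ, i < ℓ →
        (0 ≤ ∑ q ∈ Finset.Ioc (lo - 1) M,
            ((tf (L i) (psi ℓ (c i) (i : ℤ) q) : ℤ)
              - (tf (Mu i) (psi ℓ (c i) (i : ℤ) q) : ℤ)))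
        ∧ ((i : ℤ) + (((max (nzero (L i)) (nzero (Mu i)) : ℕ) : ℤ) - c i) * ℓ < M →
            ∑ q ∈ Finset.Ioc (lo - 1) M,
              ((tf (L i) (psi ℓ (c i) (i : ℤ) q) : ℤ)
                - (tf (Mu i) (psi ℓ (c i) (i : ℤ) q) : ℤ)) = 0) := by
      intro i hi
      have hψlo : psi ℓ (c i) (i : ℤ) (lo - 1) ≤ V i - 1 := by
        rw [psi_le_iff hℓ]
        have := hlo0C i hi
        omega
      have hVi1 : V i ≤ -((L i).part 0 : ℤ) := min_le_left _ _
      have hVi2 : V i ≤ -((Mu i).part 0 : ℤ) := min_le_right _ _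
      have hvan : ∀ q : ℤ, q ≤ psi ℓ (c i) (i : ℤ) (lo - 1) →
          ((tf (L i) q : ℤ) - (tf (Mu i) q : ℤ)) = 0 := by
        intro q hq
        have hz1 : tf (L i) q = 0 := tf_eq_zero _ (by omega)
        have hz2 : tf (Mu i) q = 0 := tf_eq_zero _ (by omega)
        simp [hz1, hz2]
      obtain ⟨r, hr1, hr2, hreq⟩ := fiber_formula hℓ (c i) (i : ℤ)
        (fun q => (tf (L i) q : ℤ) - (tf (Mu i) q : ℤ)) lo M (by omega) hvan
      have hq01 : psi ℓ (c i) (i : ℤ) (lo - 1) + 1 ≤ -((L i).part 0 : ℤ) := by omega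
      have hq02 : psi ℓ (c i) (i : ℤ) (lo - 1) + 1 ≤ -((Mu i).part 0 : ℤ) := by omega
      have hT1 := hTpos i hi (psi ℓ (c i) (i : ℤ) (lo - 1))
        (psi ℓ (c i) (i : ℤ) M - 1) hq01 hq02
      have hT2 := hTpos i hi (psi ℓ (c i) (i : ℤ) (lo - 1))
        (psi ℓ (c i) (i : ℤ) M) hq01 hq02
      constructor
      · rw [hreq]
        nlinarith [hT1, hT2, hr1, hr2]
      · intro hbig
        have hψM : ((max (nzero (L i)) (nzero (Mu i)) : ℕ) : ℤ) < psi ℓ (c i) (i : ℤ) M := by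
          rw [lt_psi_iff hℓ]
          exact hbig
        have hz1 := hTzero i hi (psi ℓ (c i) (i : ℤ) (lo - 1))
          (psi ℓ (c i) (i : ℤ) M - 1) hq01 hq02 (by omega)
        have hz2 := hTzero i hi (psi ℓ (c i) (i : ℤ) (lo - 1))
          (psi ℓ (c i) (i : ℤ) M) hq01 hq02 (by omega)
        rw [hreq, hz1, hz2]
        ring
    constructor
    · rw [hdec]
      apply Finset.sum_nonneg
      intro i hi
      exact (hper i (Finset.mem_range.mp hi)).1
    · intro hbig
      rw [hdec]
      apply Finset.sum_eq_zero
      intro i hi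
      exact (hper i (Finset.mem_range.mp hi)).2 (hbig i (Finset.mem_range.mp hi))
  have hconv : ∀ M lo : ℤ, lo ≤ -(lam.part 0 : ℤ) → lo ≤ -(mu.part 0 : ℤ) →
      ∑ q ∈ Finset.Ioc (lo - 1) M, ((tf lam q : ℤ) - (tf mu q : ℤ))
        = (Gf lam (-M) (max (nzero lam) M.toNat) : ℤ)
          - (Gf mu (-M) (max (nzero mu) M.toNat) : ℤ) := by
    intro M lo h1 h2
    rw [Finset.sum_sub_distrib]
    have e1 := tf_sum_eq_Gf' lam (q0 := lo - 1) (Q := M) (by omega)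
    have e2 := tf_sum_eq_Gf' mu (q0 := lo - 1) (Q := M) (by omega)
    have e1' : (∑ q ∈ Finset.Ioc (lo - 1) M, (tf lam q : ℤ))
        = (Gf lam (-M) (max (nzero lam) M.toNat) : ℤ) := by exact_mod_cast e1
    have e2' : (∑ q ∈ Finset.Ioc (lo - 1) M, (tf mu q : ℤ))
        = (Gf mu (-M) (max (nzero mu) M.toNat) : ℤ) := by exact_mod_cast e2
    omega
  have hGlam : ∀ t : ℤ, ∀ n m : ℕ, max (nzero mu) ((-t).toNat) ≤ n →
      max (nzero lam) ((-t).toNat) ≤ m → Gf mu t n ≤ Gf lam t m := by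
    intro t n m hn hm
    have hk := (hkey (-t) (min lo0 (-t)) (min_le_right _ _) (min_le_left _ _)).1
    have hc' := hconv (-t) (min lo0 (-t)) (le_trans (min_le_left _ _) hlo0A)
      (le_trans (min_le_left _ _) hlo0B)
    rw [hc'] at hk
    rw [neg_neg] at hk
    have st1 : Gf mu t n = Gf mu t (max (nzero mu) (-t).toNat) := Gf_stable mu t (le_refl _) hn
    have st2 : Gf lam t m = Gf lam t (max (nzero lam) (-t).toNat) :=
      Gf_stable lam t (le_refl _) hm
    omega
  have hsums := sums_le_of_Gf lam mu hGlam
  obtain ⟨M, hM1, hM2, hM3, hM4⟩ : ∃ M : ℤ, (nzero lam : ℤ) ≤ M ∧ (nzero mu : ℤ) ≤ M ∧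
      lo0 ≤ M ∧ ∀ i : ℕ, i < ℓ →
        (i : ℤ) + (((max (nzero (L i)) (nzero (Mu i)) : ℕ) : ℤ) - c i) * ℓ < M := by
    refine ⟨max (max (nzero lam : ℤ) (nzero mu : ℤ)) (max lo0
      (((Finset.range ℓ).sup' hne (fun i =>
        (i : ℤ) + (((max (nzero (L i)) (nzero (Mu i)) : ℕ) : ℤ) - c i) * ℓ)) + 1)),
      ?_, ?_, ?_, ?_⟩
    · exact le_trans (le_max_left _ _) (le_max_left _ _)
    · exact le_trans (le_max_right _ _) (le_max_left _ _)
    · exact le_trans (le_max_left _ _) (le_max_right _ _)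
    · intro i hi
      have h2 : (i : ℤ) + (((max (nzero (L i)) (nzero (Mu i)) : ℕ) : ℤ) - c i) * ℓ
          ≤ (Finset.range ℓ).sup' hne (fun i =>
            (i : ℤ) + (((max (nzero (L i)) (nzero (Mu i)) : ℕ) : ℤ) - c i) * ℓ) :=
        Finset.le_sup' (f := fun i : ℕ =>
          (i : ℤ) + (((max (nzero (L i)) (nzero (Mu i)) : ℕ) : ℤ) - c i) * ℓ)
          (Finset.mem_range.mpr hi)
      have h3 := le_max_right (max (nzero lam : ℤ) (nzero mu : ℤ)) (max lo0
        (((Finset.range ℓ).sup' hne (fun i =>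
          (i : ℤ) + (((max (nzero (L i)) (nzero (Mu i)) : ℕ) : ℤ) - c i) * ℓ)) + 1))
      have h4 := le_max_right lo0
        (((Finset.range ℓ).sup' hne (fun i =>
          (i : ℤ) + (((max (nzero (L i)) (nzero (Mu i)) : ℕ) : ℤ) - c i) * ℓ)) + 1)
      omega
  have hk0 := (hkey M (min lo0 M) (min_le_right _ _) (min_le_left _ _)).2 hM4
  have hc' := hconv M (min lo0 M) (le_trans (min_le_left _ _) hlo0A)
    (le_trans (min_le_left _ _) hlo0B)
  rw [hc'] at hk0
  have hm1 : max (nzero lam) M.toNat = M.toNat := by omega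
  have hm2 : max (nzero mu) M.toNat = M.toNat := by omega
  rw [hm1, hm2] at hk0
  have g1 := Gf_large lam hM1
  have g2 := Gf_large mu hM2
  have s1 := size_eq_sum lam (show nzero lam ≤ M.toNat by omega)
  have s2 := size_eq_sum mu (show nzero mu ≤ M.toNat by omega)
  have s1' : (Partition.size lam : ℤ) = ∑ b ∈ Finset.range M.toNat, (lam.part b : ℤ) := by
    exact_mod_cast s1
  have s2' : (Partition.size mu : ℤ) = ∑ b ∈ Finset.range M.toNat, (mu.part b : ℤ) := by
    exact_mod_cast s2
  have hfinal : Partition.size mu = Partition.size lam := by omega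
  exact ⟨hfinal, hfinal, hsums⟩
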